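/- arXiv:1512.02537 — 5 statements merged into one kernel-verified Lean document; each statement's English description precedes it below -/
import Mathlib

section
/- Let 1 ≤ p, q < ∞, ν > -1, t > 0, and α real. The function f(z) = ((z+it)/i)^{-α} on the upper half-plane belongs to L_ν^{p,q}(ℝ²₊) if and only if ν > -1 and α > 1/p + (ν+1)/q; in that case ‖f‖_{p,q,ν}^q = C·t^{-qα + q/p + ν + 1} where C = [B(1/2,(pα-1)/2)]^{q/p}·B(ν+1, qα - q/p - ν - 1). -/
open MeasureTheory Set ENNReal

lemma aux_lb {a b c : ℝ} (ha : 1 ≤ a) (h1 : a ≤ b) (h2 : b ≤ 2*a) :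
    min 1 ((2:ℝ) ^ c) * a ^ c ≤ b ^ c := by
  have ha0 : (0:ℝ) < a := lt_of_lt_of_le one_pos ha
  have hac : (0:ℝ) ≤ a ^ c := by positivity
  rcases le_or_gt 0 c with hc | hc
  · calc min 1 ((2:ℝ)^c) * a ^ c ≤ 1 * a ^ c :=
          mul_le_mul_of_nonneg_right (min_le_left _ _) hac
      _ ≤ b ^ c := by rw [one_mul]; exact Real.rpow_le_rpow ha0.le h1 hc
  · calc min 1 ((2:ℝ)^c) * a ^ c ≤ (2:ℝ)^c * a ^ c :=
          mul_le_mul_of_nonneg_right (min_le_right _ _) hac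
      _ = (2*a) ^ c := (Real.mul_rpow (by norm_num) ha0.le).symm
      _ ≤ b ^ c := Real.rpow_le_rpow_of_nonpos (lt_of_lt_of_le ha0 h1) h2 hc.le

lemma aux_ub {a b c : ℝ} (ha : 1 ≤ a) (h1 : a ≤ b) (h2 : b ≤ 2*a) :
    b ^ c ≤ max 1 ((2:ℝ) ^ c) * a ^ c := by
  have ha0 : (0:ℝ) < a := lt_of_lt_of_le one_pos ha
  have hac : (0:ℝ) ≤ a ^ c := by positivity
  rcases le_or_gt 0 c with hc | hc
  · calc b ^ c ≤ (2*a) ^ c := Real.rpow_le_rpow (ha0.le.trans h1) h2 hc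
      _ = (2:ℝ)^c * a^c := Real.mul_rpow (by norm_num) ha0.le
      _ ≤ max 1 ((2:ℝ)^c) * a ^ c :=
          mul_le_mul_of_nonneg_right (le_max_right _ _) hac
  · calc b ^ c ≤ a ^ c := Real.rpow_le_rpow_of_nonpos ha0 h1 hc.le
      _ ≤ max 1 ((2:ℝ)^c) * a ^ c := by
          nth_rewrite 1 [← one_mul (a^c)]
          exact mul_le_mul_of_nonneg_right (le_max_left _ _) hac

/-- The Euler Beta function in the form `B(m,n) = ∫₀^∞ u^(m-1)/(1+u)^(m+n) du`. -/
noncomputable def Beta (m n : ℝ) : ℝ := ∫ u in Ioi (0:ℝ), u ^ (m - 1) / (1 + u) ^ (m + n)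

lemma betaFun_meas (m n : ℝ) :
    Measurable (fun u : ℝ => u ^ (m-1) * (1+u) ^ (-(m+n))) :=
  (measurable_id.pow measurable_const).mul
    ((measurable_const.add measurable_id).pow measurable_const)

lemma max_pos' (c : ℝ) : (0:ℝ) < max 1 ((2:ℝ)^c) := lt_max_of_lt_left one_pos

lemma betaFun_integrableOn {m n : ℝ} (hm : 0 < m) (hn : 0 < n) :
    IntegrableOn (fun u : ℝ => u ^ (m-1) * (1+u) ^ (-(m+n))) (Ioi 0) := by
  have hmeas := betaFun_meas m n
  have hC0 : (0:ℝ) < max 1 ((2:ℝ)^(-(m+n))) := max_pos' _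
  have h1 : IntegrableOn (fun u : ℝ => u ^ (m-1) * (1+u) ^ (-(m+n))) (Ioc 0 1) := by
    have hbase : IntegrableOn (fun u : ℝ => max 1 ((2:ℝ)^(-(m+n))) * u ^ (m-1)) (Ioc 0 1) := by
      apply Integrable.const_mul
      rw [← uIoc_of_le (by norm_num : (0:ℝ) ≤ 1)]
      exact (intervalIntegral.intervalIntegrable_rpow' (by linarith)).1
    refine Integrable.mono' hbase (hmeas.aestronglyMeasurable) ?_
    filter_upwards [ae_restrict_mem measurableSet_Ioc] with u hu
    have hu0 : (0:ℝ) < u := hu.1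
    rw [Real.norm_eq_abs, abs_of_nonneg (by positivity)]
    rw [mul_comm (max 1 ((2:ℝ)^(-(m+n))))]
    apply mul_le_mul_of_nonneg_left _ (by positivity)
    calc (1+u) ^ (-(m+n)) ≤ max 1 ((2:ℝ)^(-(m+n))) * 1 ^ (-(m+n)) :=
          aux_ub le_rfl (by linarith [hu.1]) (by linarith [hu.2])
      _ = max 1 ((2:ℝ)^(-(m+n))) := by rw [Real.one_rpow, mul_one]
  have h2 : IntegrableOn (fun u : ℝ => u ^ (m-1) * (1+u) ^ (-(m+n))) (Ioi 1) := by
    have hbase : IntegrableOn (fun u : ℝ => max 1 ((2:ℝ)^(-(m+n))) * u ^ (-1-n)) (Ioi 1) :=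
      (integrableOn_Ioi_rpow_of_lt (by linarith) one_pos).const_mul _
    refine Integrable.mono' hbase (hmeas.aestronglyMeasurable) ?_
    filter_upwards [ae_restrict_mem measurableSet_Ioi] with u hu
    have hu1 : (1:ℝ) ≤ u := le_of_lt hu
    have hu0 : (0:ℝ) < u := lt_of_lt_of_le one_pos hu1
    rw [Real.norm_eq_abs, abs_of_nonneg (by positivity)]
    calc u ^ (m-1) * (1+u) ^ (-(m+n))
        ≤ u ^ (m-1) * (max 1 ((2:ℝ)^(-(m+n))) * u ^ (-(m+n))) := by
          apply mul_le_mul_of_nonneg_left _ (by positivity)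
          exact aux_ub hu1 (by linarith) (by linarith)
      _ = max 1 ((2:ℝ)^(-(m+n))) * (u ^ (m-1) * u ^ (-(m+n))) := by ring
      _ = max 1 ((2:ℝ)^(-(m+n))) * u ^ (-1-n) := by
          rw [← Real.rpow_add hu0, show m - 1 + -(m+n) = -1-n by ring]
  have := h1.union h2
  apply this.mono_set
  intro x hx
  rcases le_or_gt x 1 with h | h
  · exact Or.inl ⟨hx, h⟩
  · exact Or.inr h

lemma Beta_eq (m n : ℝ) :
    Beta m n = ∫ u in Ioi (0:ℝ), u ^ (m-1) * (1+u) ^ (-(m+n)) := by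
  rw [Beta]
  refine setIntegral_congr_fun measurableSet_Ioi (fun u hu => ?_)
  have h0 : (0:ℝ) < u := hu
  rw [Real.rpow_neg (by positivity), div_eq_mul_inv]

lemma Beta_nonneg (m n : ℝ) : 0 ≤ Beta m n :=
  setIntegral_nonneg measurableSet_Ioi (fun u hu => by have h0 : (0:ℝ) < u := hu; positivity)

lemma Beta_pos {m n : ℝ} (hm : 0 < m) (hn : 0 < n) : 0 < Beta m n := by
  rw [Beta_eq]
  have hnn : 0 ≤ᵐ[volume.restrict (Ioi (0:ℝ))]
      (fun u : ℝ => u ^ (m-1) * (1+u) ^ (-(m+n))) := by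
    filter_upwards [ae_restrict_mem measurableSet_Ioi] with u hu
    have : (0:ℝ) < u := hu
    positivity
  refine (setIntegral_pos_iff_support_of_nonneg_ae hnn (betaFun_integrableOn hm hn)).2 ?_
  have hsub : Ioi (0:ℝ) ⊆
      (Function.support fun u : ℝ => u ^ (m-1) * (1+u) ^ (-(m+n))) ∩ Ioi 0 := by
    intro u hu
    have h0 : (0:ℝ) < u := hu
    exact ⟨ne_of_gt (by positivity), hu⟩
  calc (0:ℝ≥0∞) < volume (Ioi (0:ℝ)) := by rw [Real.volume_Ioi]; exact ENNReal.zero_lt_top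
    _ ≤ _ := measure_mono hsub

lemma lintegral_betaFun {m n : ℝ} (hm : 0 < m) (hn : 0 < n) :
    ∫⁻ u in Ioi (0:ℝ), ENNReal.ofReal (u ^ (m-1) * (1+u) ^ (-(m+n)))
      = ENNReal.ofReal (Beta m n) := by
  rw [Beta_eq, ofReal_integral_eq_lintegral_ofReal (betaFun_integrableOn hm hn)]
  filter_upwards [ae_restrict_mem measurableSet_Ioi] with u hu
  have : (0:ℝ) < u := hu
  positivity

lemma lintegral_rpow_Ioi_top {e a : ℝ} (ha : 0 < a) (he : -1 ≤ e) :
    ∫⁻ x in Ioi a, ENNReal.ofReal (x ^ e) = ⊤ := by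
  by_contra h
  have hmeas : AEStronglyMeasurable (fun x : ℝ => x ^ e) (volume.restrict (Ioi a)) :=
    ((measurable_id.pow measurable_const).aestronglyMeasurable)
  have hnn : 0 ≤ᵐ[volume.restrict (Ioi a)] fun x : ℝ => x ^ e := by
    filter_upwards [ae_restrict_mem measurableSet_Ioi] with x hx
    have : 0 < x := ha.trans hx
    positivity
  have h2 : IntegrableOn (fun x : ℝ => x ^ e) (Ioi a) :=
    (lintegral_ofReal_ne_top_iff_integrable hmeas hnn).1 h
  rw [integrableOn_Ioi_rpow_iff ha] at h2
  linarith

lemma lintegral_top_of_ge {f : ℝ → ℝ} {K e a : ℝ} (ha : 0 < a) (hK : 0 < K) (he : -1 ≤ e)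
    (hf : ∀ x ∈ Ioi a, K * x ^ e ≤ f x) :
    ∫⁻ x in Ioi a, ENNReal.ofReal (f x) = ⊤ := by
  rw [eq_top_iff]
  calc (⊤:ℝ≥0∞) = ENNReal.ofReal K * ∫⁻ x in Ioi a, ENNReal.ofReal (x ^ e) := by
        rw [lintegral_rpow_Ioi_top ha he, ENNReal.mul_top (ENNReal.ofReal_pos.2 hK).ne']
    _ = ∫⁻ x in Ioi a, ENNReal.ofReal K * ENNReal.ofReal (x ^ e) := by
        rw [lintegral_const_mul' _ _ ENNReal.ofReal_ne_top]
    _ ≤ ∫⁻ x in Ioi a, ENNReal.ofReal (f x) := by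
        apply lintegral_mono_ae
        filter_upwards [ae_restrict_mem measurableSet_Ioi] with x hx
        rw [← ENNReal.ofReal_mul hK.le]
        exact ENNReal.ofReal_le_ofReal (hf x hx)

lemma even_integrable {g : ℝ → ℝ} (hg : ∀ x, g (-x) = g x) (h : IntegrableOn g (Ioi 0)) :
    Integrable g := by
  have m : MeasurableEmbedding fun x : ℝ => -x := (Homeomorph.neg ℝ).measurableEmbedding
  have hIic : IntegrableOn g (Iic 0) := by
    rw [IntegrableOn, ← Measure.map_neg_eq_self (volume : Measure ℝ)]
    rw [measurableEmbedding_neg.restrict_map, m.integrable_map_iff]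
    simp_rw [Function.comp_def, hg, neg_preimage, neg_Iic, neg_zero]
    exact (integrableOn_Ici_iff_integrableOn_Ioi (by simp)).2 h
  rw [← integrableOn_univ, ← Iic_union_Ioi (a := (0:ℝ))]
  exact hIic.union h

lemma sq_eqOn {c : ℝ} :
    EqOn (fun x : ℝ => x ^ ((2:ℝ)-1) •
        ((x ^ (2:ℝ)) ^ ((1:ℝ)/2 - 1) * (1 + x ^ (2:ℝ)) ^ (-((1:ℝ)/2 + (c - 1/2)))))
      (fun x : ℝ => (1 + x^2) ^ (-c)) (Ioi 0) := by
  intro x hx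
  have hx0 : (0:ℝ) < x := hx
  have h2 : x ^ (2:ℝ) = x ^ 2 := by
    rw [show (2:ℝ) = ((2:ℕ):ℝ) by norm_num, Real.rpow_natCast]
  have h3 : (x ^ (2:ℝ)) ^ ((1:ℝ)/2 - 1) = x⁻¹ := by
    rw [← Real.rpow_mul hx0.le, show (2:ℝ) * ((1:ℝ)/2 - 1) = -1 by norm_num,
      Real.rpow_neg_one]
  show x ^ ((2:ℝ)-1) * ((x ^ (2:ℝ)) ^ ((1:ℝ)/2 - 1) * (1 + x ^ (2:ℝ)) ^ (-((1:ℝ)/2 + (c - 1/2)))) = _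
  rw [h3, h2, show ((2:ℝ)-1) = 1 by norm_num, Real.rpow_one,
    show -((1:ℝ)/2 + (c - 1/2)) = -c by ring]
  field_simp

lemma h_integrableOn_Ioi {c : ℝ} (hc : 1 < 2*c) :
    IntegrableOn (fun x : ℝ => (1 + x^2) ^ (-c)) (Ioi 0) := by
  have base := betaFun_integrableOn (m := 1/2) (n := c - 1/2) (by norm_num) (by linarith)
  have := (integrableOn_Ioi_comp_rpow_iff'
    (fun u : ℝ => u ^ ((1:ℝ)/2-1) * (1+u) ^ (-((1:ℝ)/2+(c-1/2)))) (p := 2) two_ne_zero).2 base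
  exact this.congr_fun sq_eqOn measurableSet_Ioi

lemma h_integrable {c : ℝ} (hc : 1 < 2*c) :
    Integrable (fun x : ℝ => (1 + x^2) ^ (-c)) := by
  apply even_integrable (fun x => by rw [neg_sq]) (h_integrableOn_Ioi hc)

lemma h_value {c : ℝ} :
    ∫ x : ℝ, (1 + x^2) ^ (-c) = Beta (1/2) (c - 1/2) := by
  have h1 : (∫ x in Ioi (0:ℝ), (2 * x ^ ((2:ℝ)-1)) •
        ((fun u : ℝ => u ^ ((1:ℝ)/2-1) * (1+u) ^ (-((1:ℝ)/2+(c-1/2)))) (x ^ (2:ℝ))))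
      = ∫ u in Ioi (0:ℝ), u ^ ((1:ℝ)/2-1) * (1+u) ^ (-((1:ℝ)/2+(c-1/2))) :=
    integral_comp_rpow_Ioi_of_pos
      (g := fun u : ℝ => u ^ ((1:ℝ)/2-1) * (1+u) ^ (-((1:ℝ)/2+(c-1/2)))) two_pos
  have h2 : (∫ x in Ioi (0:ℝ), (2 * x ^ ((2:ℝ)-1)) •
        ((fun u : ℝ => u ^ ((1:ℝ)/2-1) * (1+u) ^ (-((1:ℝ)/2+(c-1/2)))) (x ^ (2:ℝ))))
      = 2 * ∫ x in Ioi (0:ℝ), (1 + x^2) ^ (-c) := by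
    rw [← integral_const_mul]
    refine setIntegral_congr_fun measurableSet_Ioi (fun x hx => ?_)
    have h := sq_eqOn (c := c) hx
    simp only [smul_eq_mul] at h ⊢
    rw [mul_assoc, h]
  have h3 : ∫ x : ℝ, (1 + x^2) ^ (-c) = 2 * ∫ x in Ioi (0:ℝ), (1 + x^2) ^ (-c) := by
    calc ∫ x : ℝ, (1 + x^2) ^ (-c) = ∫ x : ℝ, (1 + |x|^2) ^ (-c) := by
          refine integral_congr_ae (ae_of_all _ fun x => ?_)
          show (1 + x^2) ^ (-c) = (1 + |x|^2) ^ (-c)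
          rw [sq_abs]
      _ = 2 * ∫ x in Ioi (0:ℝ), (1 + x^2) ^ (-c) :=
          integral_comp_abs (f := fun y : ℝ => (1 + y^2) ^ (-c))
  rw [h3, ← h2, h1, Beta_eq]

lemma gs_comp {c s : ℝ} (hs : 0 < s) :
    (fun u : ℝ => ((s*u)^2 + s^2) ^ (-c)) = fun u : ℝ => s ^ (-(2*c)) * (1 + u^2) ^ (-c) := by
  funext u
  have h1 : (s*u)^2 + s^2 = s^2 * (1 + u^2) := by ring
  rw [h1, Real.mul_rpow (by positivity) (by positivity)]
  congr 1
  rw [← Real.rpow_natCast s 2, ← Real.rpow_mul hs.le]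
  norm_num

lemma gs_integrable {c s : ℝ} (hs : 0 < s) (hc : 1 < 2*c) :
    Integrable (fun x : ℝ => (x^2 + s^2) ^ (-c)) := by
  refine (integrable_comp_mul_left_iff (fun x : ℝ => (x^2 + s^2) ^ (-c)) hs.ne').1 ?_
  show Integrable (fun u : ℝ => ((s*u)^2 + s^2) ^ (-c))
  rw [gs_comp hs]
  exact (h_integrable hc).const_mul _

lemma gs_value {c s : ℝ} (hs : 0 < s) :
    ∫ x : ℝ, (x^2 + s^2) ^ (-c) = Beta (1/2) (c - 1/2) * s ^ (1 - 2*c) := by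
  have lhs : ∫ x : ℝ, ((s*x)^2 + s^2) ^ (-c)
      = s ^ (-(2*c)) * Beta (1/2) (c - 1/2) := by
    rw [gs_comp hs, integral_const_mul, h_value]
  have key := MeasureTheory.Measure.integral_comp_mul_left (fun x : ℝ => (x^2 + s^2) ^ (-c)) s
  beta_reduce at key
  simp only [smul_eq_mul, abs_of_pos (inv_pos.2 hs)] at key
  have e1 : ∫ x : ℝ, (x^2 + s^2) ^ (-c)
      = s * (s⁻¹ * ∫ x : ℝ, (x^2 + s^2) ^ (-c)) := by
    rw [← mul_assoc, mul_inv_cancel₀ hs.ne', one_mul]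
  rw [e1, ← key, lhs]
  have e2 : s * s ^ (-(2*c)) = s ^ (1 - 2*c) := by
    nth_rewrite 1 [← Real.rpow_one s]
    rw [← Real.rpow_add hs, show (1:ℝ) + -(2*c) = 1 - 2*c by ring]
  rw [← mul_assoc, e2, mul_comm]

lemma inner_lint {c s : ℝ} (hs : 0 < s) (hc : 1 < 2*c) :
    ∫⁻ x : ℝ, ENNReal.ofReal ((x^2 + s^2) ^ (-c))
      = ENNReal.ofReal (Beta (1/2) (c - 1/2) * s ^ (1 - 2*c)) := by
  rw [← gs_value hs, ← ofReal_integral_eq_lintegral_ofReal (gs_integrable hs hc)]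
  exact ae_of_all _ fun x => by positivity

lemma inner_lint_top {c s : ℝ} (hs : 0 < s) (hc : 2*c ≤ 1) :
    ∫⁻ x : ℝ, ENNReal.ofReal ((x^2 + s^2) ^ (-c)) = ⊤ := by
  rw [eq_top_iff]
  calc (⊤:ℝ≥0∞) = ∫⁻ x in Ioi (max 1 s), ENNReal.ofReal ((x^2 + s^2) ^ (-c)) := by
        symm
        refine lintegral_top_of_ge (K := min 1 ((2:ℝ) ^ (-c))) (e := -(2*c))
          (lt_of_lt_of_le one_pos (le_max_left 1 s)) (lt_min one_pos (by positivity))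
          (by linarith) (fun x hx => ?_)
        have hx1 : (1:ℝ) ≤ x := le_trans (le_max_left 1 s) (le_of_lt hx)
        have hxs : s ≤ x := le_trans (le_max_right 1 s) (le_of_lt hx)
        have hx0 : (0:ℝ) < x := lt_of_lt_of_le one_pos hx1
        have hb : min 1 ((2:ℝ) ^ (-c)) * (x^2) ^ (-c) ≤ (x^2 + s^2) ^ (-c) :=
          aux_lb (by nlinarith) (by nlinarith) (by nlinarith)
        calc min 1 ((2:ℝ) ^ (-c)) * x ^ (-(2*c))
            = min 1 ((2:ℝ) ^ (-c)) * (x^2) ^ (-c) := by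
              rw [← Real.rpow_natCast x 2, ← Real.rpow_mul hx0.le]
              norm_num
          _ ≤ _ := hb
    _ ≤ ∫⁻ x : ℝ, ENNReal.ofReal ((x^2 + s^2) ^ (-c)) := setLIntegral_le_lintegral _ _

lemma norm_f {x s α : ℝ} (hs : 0 < s) {p : ℝ} (hp : 0 ≤ p) :
    ((‖((↑x + ↑s * Complex.I) / Complex.I) ^ (-(α:ℂ))‖₊ : ℝ≥0∞)) ^ p
      = ENNReal.ofReal ((x^2 + s^2) ^ (-(p*α/2))) := by
  have habs : ‖(↑x + ↑s * Complex.I) / Complex.I‖ = (x^2 + s^2) ^ ((1:ℝ)/2) := by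
    rw [norm_div, Complex.norm_I, div_one, Complex.norm_add_mul_I, Real.sqrt_eq_rpow]
  have hnorm : ‖((↑x + ↑s * Complex.I) / Complex.I) ^ (-(α:ℂ))‖ = (x^2 + s^2) ^ (-(α/2)) := by
    rw [show (-(α:ℂ)) = ((-α : ℝ) : ℂ) by push_cast; ring]
    rw [Complex.norm_cpow_real, habs, ← Real.rpow_mul (by positivity)]
    rw [show (1:ℝ)/2 * (-α) = -(α/2) by ring]
  rw [← enorm_eq_nnnorm, ← ofReal_norm, ENNReal.ofReal_rpow_of_nonneg (norm_nonneg _) hp, hnorm,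
    ← Real.rpow_mul (by positivity), show -(α/2) * p = -(p*α/2) by ring]

/-- The mixed norm `‖f‖_{p,q,ν}` on the upper half-plane:
`(∫₀^∞ (∫_ℝ |f(x+iy)|^p dx)^{q/p} y^ν dy)^{1/q}`. -/
noncomputable def mixedNormC (p q ν : ℝ) (f : ℂ → ℂ) : ℝ≥0∞ :=
  (∫⁻ y in Ioi (0:ℝ),
      (∫⁻ x : ℝ, (‖f (↑x + ↑y * Complex.I)‖₊ : ℝ≥0∞) ^ p) ^ (q / p)
        * ENNReal.ofReal (y ^ ν)) ^ (1 / q)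

set_option maxHeartbeats 2000000 in
theorem stmt_2 (p q ν t α : ℝ) (hp : 1 ≤ p) (hq : 1 ≤ q) (hν : -1 < ν) (ht : 0 < t) :
    (mixedNormC p q ν (fun z => ((z + ↑t * Complex.I) / Complex.I) ^ (-(α:ℂ))) < ⊤ ↔
      (-1 < ν ∧ 1 / p + (ν + 1) / q < α)) ∧
    ((-1 < ν ∧ 1 / p + (ν + 1) / q < α) →
      (mixedNormC p q ν (fun z => ((z + ↑t * Complex.I) / Complex.I) ^ (-(α:ℂ)))) ^ q
        = ENNReal.ofReal
            ((Beta (1/2) ((p * α - 1)/2)) ^ (q / p) * Beta (ν + 1) (q * α - q / p - ν - 1)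
              * t ^ (-(q * α) + q / p + ν + 1))) := by
  have hp0 : (0:ℝ) < p := lt_of_lt_of_le one_pos hp
  have hq0 : (0:ℝ) < q := lt_of_lt_of_le one_pos hq
  have hqp0 : (0:ℝ) < q/p := by positivity
  set F : ℂ → ℂ := fun z => ((z + ↑t * Complex.I) / Complex.I) ^ (-(α:ℂ)) with hF
  set O : ℝ≥0∞ := ∫⁻ y in Ioi (0:ℝ),
      (∫⁻ x : ℝ, ((‖F (↑x + ↑y * Complex.I)‖₊ : ℝ≥0∞)) ^ p) ^ (q/p)
        * ENNReal.ofReal (y ^ ν) with hO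
  have hmixO : mixedNormC p q ν F = O ^ (1/q) := by rw [hO]; rfl
  -- pointwise inner integral rewrite
  have hinner : ∀ y ∈ Ioi (0:ℝ),
      (∫⁻ x : ℝ, ((‖F (↑x + ↑y * Complex.I)‖₊ : ℝ≥0∞)) ^ p)
        = ∫⁻ x : ℝ, ENNReal.ofReal ((x^2 + (y+t)^2) ^ (-(p*α/2))) := by
    intro y hy
    have hy0 : (0:ℝ) < y := hy
    refine lintegral_congr fun x => ?_
    have harg : ((x:ℂ) + ↑y*Complex.I + ↑t*Complex.I) = ((x:ℂ) + ↑(y+t)*Complex.I) := by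
      push_cast; ring
    show ((‖(((x:ℂ) + ↑y*Complex.I + ↑t*Complex.I)/Complex.I) ^ (-(α:ℂ))‖₊ : ℝ≥0∞)) ^ p = _
    rw [harg, norm_f (by linarith) hp0.le]
  -- algebraic equivalences
  have hβeq : (1/p + (ν+1)/q < α) ↔ 0 < q*α - q/p - ν - 1 := by
    have heq : q*α - q/p - ν - 1 = q * (α - (1/p + (ν+1)/q)) := by field_simp; ring
    rw [heq]
    constructor
    · intro h; exact mul_pos hq0 (by linarith)
    · intro h; by_contra h'; push_neg at h'; nlinarith
  have himp2 : 1/p + (ν+1)/q < α → 1 < p*α := by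
    intro h
    have h1 : 0 < (ν+1)/q := div_pos (by linarith) hq0
    have h2 : 1/p < α := by linarith
    have h3 := (div_lt_iff₀ hp0).1 h2
    nlinarith
  -- case: inner integral diverges
  have hcase_top : p*α ≤ 1 → O = ⊤ := by
    intro hpa
    rw [hO]
    have step : ∀ y ∈ Ioi (0:ℝ),
        (∫⁻ x : ℝ, ((‖F (↑x + ↑y * Complex.I)‖₊ : ℝ≥0∞)) ^ p) ^ (q/p)
          * ENNReal.ofReal (y ^ ν) = (⊤:ℝ≥0∞) := by
      intro y hy
      have hy0 : (0:ℝ) < y := hy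
      rw [hinner y hy, inner_lint_top (by linarith) (by linarith : 2*(p*α/2) ≤ 1),
        ENNReal.top_rpow_of_pos hqp0,
        ENNReal.top_mul (ENNReal.ofReal_pos.2 (Real.rpow_pos_of_pos hy0 ν)).ne']
    rw [setLIntegral_congr_fun measurableSet_Ioi step, setLIntegral_const,
      Real.volume_Ioi]
    simp
  -- rewrite of O when inner integral converges
  have hOre : 1 < p*α → O = ENNReal.ofReal (Beta (1/2) (p*α/2 - 1/2) ^ (q/p)) *
      ∫⁻ y in Ioi (0:ℝ), ENNReal.ofReal ((y+t) ^ (q/p - q*α) * y ^ ν) := by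
    intro hpa
    have hB0 : 0 ≤ Beta (1/2) (p*α/2 - 1/2) := Beta_nonneg _ _
    rw [hO]
    have step : ∀ y ∈ Ioi (0:ℝ),
        (∫⁻ x : ℝ, ((‖F (↑x + ↑y * Complex.I)‖₊ : ℝ≥0∞)) ^ p) ^ (q/p)
            * ENNReal.ofReal (y ^ ν)
          = ENNReal.ofReal (Beta (1/2) (p*α/2 - 1/2) ^ (q/p))
            * ENNReal.ofReal ((y+t) ^ (q/p - q*α) * y ^ ν) := by
      intro y hy
      have hy0 : (0:ℝ) < y := hy
      rw [hinner y hy, inner_lint (by linarith) (by linarith : 1 < 2*(p*α/2))]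
      rw [ENNReal.ofReal_rpow_of_nonneg
        (mul_nonneg hB0 (Real.rpow_nonneg (by linarith) _)) hqp0.le]
      rw [Real.mul_rpow hB0 (Real.rpow_nonneg (by linarith) _)]
      rw [← Real.rpow_mul (by linarith : (0:ℝ) ≤ y+t)]
      rw [show (1 - 2*(p*α/2)) * (q/p) = q/p - q*α by field_simp]
      rw [ENNReal.ofReal_mul (Real.rpow_nonneg hB0 _), mul_assoc,
        ← ENNReal.ofReal_mul (Real.rpow_nonneg (by linarith) _)]
    rw [setLIntegral_congr_fun measurableSet_Ioi step,
      lintegral_const_mul' _ _ ENNReal.ofReal_ne_top]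
  -- outer integral diverges
  have hGtop : q*α - q/p - ν - 1 ≤ 0 →
      (∫⁻ y in Ioi (0:ℝ), ENNReal.ofReal ((y+t) ^ (q/p - q*α) * y ^ ν)) = ⊤ := by
    intro hb
    have a0 : (0:ℝ) < max 1 t := lt_max_of_lt_left one_pos
    rw [eq_top_iff]
    calc (⊤:ℝ≥0∞) = ∫⁻ y in Ioi (max 1 t), ENNReal.ofReal ((y+t) ^ (q/p - q*α) * y ^ ν) := by
          symm
          refine lintegral_top_of_ge (K := min 1 ((2:ℝ)^(q/p - q*α))) (e := (q/p - q*α)+ν) a0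
            (lt_min one_pos (by positivity)) (by linarith) (fun y hy => ?_)
          have hy1 : (1:ℝ) ≤ y := le_trans (le_max_left 1 t) (le_of_lt hy)
          have hyt : t ≤ y := le_trans (le_max_right 1 t) (le_of_lt hy)
          have hy0 : (0:ℝ) < y := lt_of_lt_of_le one_pos hy1
          have hb2 : min 1 ((2:ℝ)^(q/p - q*α)) * y^(q/p - q*α) ≤ (y+t)^(q/p - q*α) :=
            aux_lb hy1 (by linarith) (by linarith)
          calc min 1 ((2:ℝ)^(q/p - q*α)) * y^((q/p - q*α)+ν)
              = (min 1 ((2:ℝ)^(q/p - q*α)) * y^(q/p - q*α)) * y^ν := by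
                rw [Real.rpow_add hy0]; ring
            _ ≤ (y+t)^(q/p - q*α) * y^ν :=
                mul_le_mul_of_nonneg_right hb2 (Real.rpow_nonneg hy0.le _)
      _ ≤ _ := lintegral_mono_set (Ioi_subset_Ioi a0.le)
  have hcase_mid : 1 < p*α → q*α - q/p - ν - 1 ≤ 0 → O = ⊤ := by
    intro hpa hb
    rw [hOre hpa, hGtop hb, ENNReal.mul_top
      (ENNReal.ofReal_pos.2 (Real.rpow_pos_of_pos
        (Beta_pos one_half_pos (by linarith : (0:ℝ) < p*α/2 - 1/2)) _)).ne']
  -- the convergent value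
  have hcase_val : 0 < q*α - q/p - ν - 1 → 1 < p*α →
      O = ENNReal.ofReal ((Beta (1/2) ((p*α-1)/2)) ^ (q/p)
        * Beta (ν+1) (q*α - q/p - ν - 1) * t ^ (-(q*α) + q/p + ν + 1)) := by
    intro hb hpa
    rw [hOre hpa]
    have hGbase : IntegrableOn (fun u : ℝ => u ^ ν * (1+u) ^ (q/p - q*α)) (Ioi 0) := by
      have h := betaFun_integrableOn (m := ν+1) (n := q*α - q/p - ν - 1) (by linarith) hb
      rw [show ((ν+1)-1 : ℝ) = ν from by ring,
        show (-((ν+1)+(q*α - q/p - ν - 1)) : ℝ) = q/p - q*α from by ring] at h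
      exact h
    have hI0 : (∫ u in Ioi (0:ℝ), u ^ ν * (1+u) ^ (q/p - q*α))
        = Beta (ν+1) (q*α - q/p - ν - 1) := by
      rw [Beta_eq, show ((ν+1)-1 : ℝ) = ν from by ring,
        show (-((ν+1)+(q*α - q/p - ν - 1)) : ℝ) = q/p - q*α from by ring]
    have hGcomp : ∀ u ∈ Ioi (0:ℝ), (t*u+t) ^ (q/p - q*α) * (t*u) ^ ν
        = t ^ ((q/p - q*α)+ν) * (u ^ ν * (1+u) ^ (q/p - q*α)) := by
      intro u hu
      have hu0 : (0:ℝ) < u := hu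
      rw [show t*u+t = t*(1+u) by ring, Real.mul_rpow ht.le (by positivity),
        Real.mul_rpow ht.le hu0.le, Real.rpow_add ht]
      ring
    have hGint : IntegrableOn (fun y : ℝ => (y+t) ^ (q/p - q*α) * y ^ ν) (Ioi 0) := by
      have h0red : IntegrableOn (fun u : ℝ => (t*u+t) ^ (q/p - q*α) * (t*u) ^ ν) (Ioi 0) :=
        IntegrableOn.congr_fun (hGbase.const_mul _)
          (fun u hu => (hGcomp u hu).symm) measurableSet_Ioi
      have h0 : IntegrableOn
          (fun u : ℝ => (fun y : ℝ => (y+t) ^ (q/p - q*α) * y ^ ν) (t*u)) (Ioi 0) := h0red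
      have h1 := (integrableOn_Ioi_comp_mul_left_iff
        (fun y : ℝ => (y+t) ^ (q/p - q*α) * y ^ ν) 0 ht).1 h0
      rwa [mul_zero] at h1
    have hGval : (∫ y in Ioi (0:ℝ), (y+t) ^ (q/p - q*α) * y ^ ν)
        = t ^ (-(q*α) + q/p + ν + 1) * Beta (ν+1) (q*α - q/p - ν - 1) := by
      have key := integral_comp_mul_left_Ioi
        (fun y : ℝ => (y+t) ^ (q/p - q*α) * y ^ ν) 0 ht
      beta_reduce at key
      rw [mul_zero, smul_eq_mul] at key
      have lhs : (∫ u in Ioi (0:ℝ), (t*u+t) ^ (q/p - q*α) * (t*u) ^ ν)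
          = t ^ ((q/p - q*α)+ν) * Beta (ν+1) (q*α - q/p - ν - 1) := by
        rw [← hI0, ← integral_const_mul]
        exact setIntegral_congr_fun measurableSet_Ioi hGcomp
      rw [lhs] at key
      have h2 : (∫ y in Ioi (0:ℝ), (y+t) ^ (q/p - q*α) * y ^ ν)
          = t * (t ^ ((q/p - q*α)+ν) * Beta (ν+1) (q*α - q/p - ν - 1)) := by
        rw [key, ← mul_assoc, mul_inv_cancel₀ ht.ne', one_mul]
      rw [h2, ← mul_assoc]
      congr 1
      have hsplit : t ^ ((1:ℝ) + ((q/p - q*α)+ν)) = t * t ^ ((q/p - q*α)+ν) := by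
        rw [Real.rpow_add ht, Real.rpow_one]
      rw [show (-(q*α) + q/p + ν + 1 : ℝ) = 1 + ((q/p - q*α)+ν) by ring, hsplit]
    have hnn : 0 ≤ᵐ[volume.restrict (Ioi (0:ℝ))]
        fun y : ℝ => (y+t) ^ (q/p - q*α) * y ^ ν := by
      filter_upwards [ae_restrict_mem measurableSet_Ioi] with y hy
      have hy0 : (0:ℝ) < y := hy
      exact mul_nonneg (Real.rpow_nonneg (by linarith) _) (Real.rpow_nonneg hy0.le _)
    rw [← ofReal_integral_eq_lintegral_ofReal hGint hnn, hGval,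
      ← ENNReal.ofReal_mul (Real.rpow_nonneg (Beta_nonneg _ _) _)]
    congr 1
    rw [show (p*α/2 - 1/2 : ℝ) = (p*α-1)/2 by ring]
    ring
  constructor
  · rw [hmixO, ENNReal.rpow_lt_top_iff_of_pos (by positivity : (0:ℝ) < 1/q)]
    constructor
    · intro h
      refine ⟨hν, ?_⟩
      by_contra hcon
      rcases le_or_gt (p*α) 1 with hpa | hpa
      · rw [hcase_top hpa] at h; exact absurd h (lt_irrefl _)
      · have hb : q*α - q/p - ν - 1 ≤ 0 := by
          by_contra hb'; push_neg at hb'; exact hcon (hβeq.2 hb')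
        rw [hcase_mid hpa hb] at h; exact absurd h (lt_irrefl _)
    · rintro ⟨-, hcnd⟩
      rw [hcase_val (hβeq.1 hcnd) (himp2 hcnd)]
      exact ENNReal.ofReal_lt_top
  · rintro ⟨-, hcnd⟩
    rw [hmixO, ← ENNReal.rpow_mul, one_div_mul_cancel hq0.ne', ENNReal.rpow_one,
      hcase_val (hβeq.1 hcnd) (himp2 hcnd)]
end

section
/- Suppose a, b > -1, 1 ≤ p ≤ q < ∞ and the operator H_{α,β,γ} is bounded from L^p((0,∞), y^a dy) to L^q((0,∞), y^b dy). Then γ = α + β + 1 + (b+1)/q - (a+1)/p and -qα < b+1 < q(γ-α). -/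
open MeasureTheory Set ENNReal

/-- The measure `x^a dx` on `(0,∞)`. -/
noncomputable def wMeasure (a : ℝ) : Measure ℝ :=
  (volume.restrict (Ioi (0:ℝ))).withDensity (fun x => ENNReal.ofReal (x ^ a))

/-- The Hilbert-type operator `H_{α,β,γ} f(x) = x^α ∫₀^∞ f(y) y^β/(x+y)^γ dy`. -/
noncomputable def Hop (α β γ : ℝ) (f : ℝ → ℝ) : ℝ → ℝ :=
  fun x => x ^ α * ∫ y in Ioi (0:ℝ), f y * y ^ β / (x + y) ^ γ

/-! ### Auxiliary lemmas -/

lemma aux_rpow_lb {x c1 c2 s : ℝ} (h0 : 0 < c1) (h1 : c1 ≤ x) (h2 : x ≤ c2) :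
    min (c1 ^ s) (c2 ^ s) ≤ x ^ s := by
  rcases le_or_gt 0 s with hs | hs
  · exact le_trans (min_le_left _ _) (Real.rpow_le_rpow h0.le h1 hs)
  · exact le_trans (min_le_right _ _) (Real.rpow_le_rpow_of_nonpos (h0.trans_le h1) h2 hs.le)

lemma aux_rpow_ub {x c1 c2 s : ℝ} (h0 : 0 < c1) (h1 : c1 ≤ x) (h2 : x ≤ c2) :
    x ^ s ≤ max (c1 ^ s) (c2 ^ s) := by
  rcases le_or_gt 0 s with hs | hs
  · exact le_trans (Real.rpow_le_rpow (h0.le.trans h1) h2 hs) (le_max_right _ _)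
  · exact le_trans (Real.rpow_le_rpow_of_nonpos h0 h1 hs.le) (le_max_left _ _)

lemma aux_rpow_all_le {t K : ℝ} (h : ∀ l : ℝ, 0 < l → l ^ t ≤ K) : t = 0 := by
  by_contra ht
  have hK : 1 ≤ K := by simpa using h 1 one_pos
  have h2 := h ((K + 1) ^ t⁻¹) (Real.rpow_pos_of_pos (by linarith) _)
  rw [← Real.rpow_mul (by linarith : (0:ℝ) ≤ K + 1), inv_mul_cancel₀ ht, Real.rpow_one] at h2
  linarith

/-! ### Scaling of lintegrals on `(0,∞)` -/

lemma lint_scale (F : ℝ → ℝ≥0∞) {l : ℝ} (hl : 0 < l) :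
    ∫⁻ x in Ioi (0:ℝ), F (l * x) = ENNReal.ofReal l⁻¹ * ∫⁻ x in Ioi (0:ℝ), F x := by
  have me : MeasurableEmbedding (fun x : ℝ => l * x) :=
    (MeasurableEquiv.mulLeft₀ l hl.ne').measurableEmbedding
  have key : ∀ x : ℝ, (Ioi (0:ℝ)).indicator (fun x => F (l * x)) x
      = ((Ioi (0:ℝ)).indicator F) (l * x) := by
    intro x
    by_cases hx : x ∈ Ioi (0:ℝ)
    · rw [indicator_of_mem hx, indicator_of_mem (by exact mul_pos hl hx)]
    · rw [indicator_of_notMem hx, indicator_of_notMem (by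
        simp only [mem_Ioi, not_lt] at hx ⊢
        exact mul_nonpos_of_nonneg_of_nonpos hl.le hx)]
  rw [← lintegral_indicator measurableSet_Ioi]
  simp_rw [key]
  rw [← me.lintegral_map ((Ioi (0:ℝ)).indicator F), Real.map_volume_mul_left hl.ne',
    abs_of_pos (inv_pos.mpr hl), lintegral_smul_measure,
    lintegral_indicator measurableSet_Ioi, smul_eq_mul]

/-! ### The weighted integral `Wint` -/

noncomputable def Wint (b q : ℝ) (g : ℝ → ℝ) : ℝ≥0∞ :=
  ∫⁻ x in Ioi (0:ℝ), ENNReal.ofReal (x ^ b) * (‖g x‖₊ : ℝ≥0∞) ^ q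

lemma eLpNorm_wMeasure {c q : ℝ} (hq : 0 < q) (g : ℝ → ℝ) :
    eLpNorm g (ENNReal.ofReal q) (wMeasure c) = (Wint c q g) ^ (1 / q) := by
  rw [eLpNorm_eq_lintegral_rpow_enorm_toReal (p := ENNReal.ofReal q)
      (by simp [ENNReal.ofReal_eq_zero, hq.not_ge]) ENNReal.ofReal_ne_top,
    ENNReal.toReal_ofReal hq.le]
  unfold wMeasure Wint
  rw [lintegral_withDensity_eq_lintegral_mul_non_measurable _ (by fun_prop)
      (Filter.Eventually.of_forall fun x => ENNReal.ofReal_lt_top)]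
  rfl

lemma Wint_congr {b q : ℝ} {g1 g2 : ℝ → ℝ} (h : ∀ x ∈ Ioi (0:ℝ), g1 x = g2 x) :
    Wint b q g1 = Wint b q g2 :=
  setLIntegral_congr_fun measurableSet_Ioi
    (fun x hx => by rw [h x hx])

lemma Wint_const_mul {b q : ℝ} (hq : 0 ≤ q) {c : ℝ} (hc : 0 ≤ c) (g : ℝ → ℝ) :
    Wint b q (fun x => c * g x) = ENNReal.ofReal c ^ q * Wint b q g := by
  unfold Wint
  have key : ∀ x : ℝ, ENNReal.ofReal (x ^ b) * (‖c * g x‖₊ : ℝ≥0∞) ^ q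
      = ENNReal.ofReal c ^ q * (ENNReal.ofReal (x ^ b) * (‖g x‖₊ : ℝ≥0∞) ^ q) := by
    intro x
    rw [nnnorm_mul, ENNReal.coe_mul, ENNReal.mul_rpow_of_nonneg _ _ hq,
      (by exact (enorm_eq_nnnorm c).symm.trans (Real.enorm_eq_ofReal hc) : (‖c‖₊ : ℝ≥0∞) = ENNReal.ofReal c)]
    ring
  simp_rw [key]
  rw [lintegral_const_mul' _ _ (ENNReal.rpow_ne_top_of_nonneg hq ENNReal.ofReal_ne_top)]

lemma Wint_scale {b q : ℝ} (g : ℝ → ℝ) {l : ℝ} (hl : 0 < l) :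
    Wint b q (fun x => g (l * x)) = ENNReal.ofReal (l⁻¹ * l⁻¹ ^ b) * Wint b q g := by
  unfold Wint
  have key : ∀ x ∈ Ioi (0:ℝ), ENNReal.ofReal (x ^ b) * (‖g (l * x)‖₊ : ℝ≥0∞) ^ q
      = (fun u => ENNReal.ofReal (l⁻¹ ^ b) * (ENNReal.ofReal (u ^ b) * (‖g u‖₊ : ℝ≥0∞) ^ q))
          (l * x) := by
    intro x hx
    simp only []
    rw [← mul_assoc, ← ENNReal.ofReal_mul (Real.rpow_nonneg (inv_nonneg.mpr hl.le) b),
      ← Real.mul_rpow (inv_nonneg.mpr hl.le) (mul_nonneg hl.le (le_of_lt hx)),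
      inv_mul_cancel_left₀ hl.ne']
  calc ∫⁻ x in Ioi (0:ℝ), ENNReal.ofReal (x ^ b) * (‖g (l * x)‖₊ : ℝ≥0∞) ^ q
      = ∫⁻ x in Ioi (0:ℝ), (fun u => ENNReal.ofReal (l⁻¹ ^ b)
          * (ENNReal.ofReal (u ^ b) * (‖g u‖₊ : ℝ≥0∞) ^ q)) (l * x) :=
        setLIntegral_congr_fun measurableSet_Ioi key
    _ = ENNReal.ofReal l⁻¹ * ∫⁻ u in Ioi (0:ℝ), ENNReal.ofReal (l⁻¹ ^ b)
          * (ENNReal.ofReal (u ^ b) * (‖g u‖₊ : ℝ≥0∞) ^ q) :=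
        lint_scale (fun u => ENNReal.ofReal (l⁻¹ ^ b)
          * (ENNReal.ofReal (u ^ b) * (‖g u‖₊ : ℝ≥0∞) ^ q)) hl
    _ = ENNReal.ofReal l⁻¹ * (ENNReal.ofReal (l⁻¹ ^ b)
          * ∫⁻ u in Ioi (0:ℝ), ENNReal.ofReal (u ^ b) * (‖g u‖₊ : ℝ≥0∞) ^ q) := by
        rw [lintegral_const_mul' _ _ ENNReal.ofReal_ne_top]
    _ = ENNReal.ofReal (l⁻¹ * l⁻¹ ^ b)
          * ∫⁻ u in Ioi (0:ℝ), ENNReal.ofReal (u ^ b) * (‖g u‖₊ : ℝ≥0∞) ^ q := by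
        rw [ENNReal.ofReal_mul (inv_nonneg.mpr hl.le)]
        ring

/-! ### The test function and its properties -/

noncomputable def f0 : ℝ → ℝ := (Ioo (1:ℝ) 2).indicator (fun _ => (1:ℝ))

lemma f0_measurable : Measurable f0 := measurable_const.indicator measurableSet_Ioo

lemma Hop_f0 (α β γ x : ℝ) :
    Hop α β γ f0 x = x ^ α * ∫ y in Ioo (1:ℝ) 2, y ^ β / (x + y) ^ γ := by
  unfold Hop
  congr 1
  have h1 : ∀ y : ℝ, f0 y * y ^ β / (x + y) ^ γ
      = (Ioo (1:ℝ) 2).indicator (fun y => y ^ β / (x + y) ^ γ) y := by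
    intro y
    unfold f0
    by_cases hy : y ∈ Ioo (1:ℝ) 2 <;> simp [hy]
  simp_rw [h1]
  have hsub : Ioo (1:ℝ) 2 ∩ Ioi 0 = Ioo (1:ℝ) 2 :=
    inter_eq_left.mpr fun y hy => lt_trans one_pos hy.1
  rw [integral_indicator measurableSet_Ioo, Measure.restrict_restrict measurableSet_Ioo, hsub]

noncomputable def Cbeta (β : ℝ) : ℝ := min ((1:ℝ) ^ β) (2 ^ β)
noncomputable def Mgamma (γ : ℝ) : ℝ := max ((1:ℝ) ^ γ) (3 ^ γ)
noncomputable def c0 (β γ : ℝ) : ℝ := Cbeta β / Mgamma γ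

lemma Cbeta_pos (β : ℝ) : 0 < Cbeta β :=
  lt_min (Real.rpow_pos_of_pos one_pos β) (Real.rpow_pos_of_pos two_pos β)

lemma Mgamma_pos (γ : ℝ) : 0 < Mgamma γ :=
  lt_of_lt_of_le (Real.rpow_pos_of_pos one_pos γ) (le_max_left _ _)

lemma c0_pos (β γ : ℝ) : 0 < c0 β γ := div_pos (Cbeta_pos β) (Mgamma_pos γ)

lemma integral_lb {x β γ D : ℝ} (hx : 0 < x) (hD : 0 < D)
    (hbound : ∀ y ∈ Ioo (1:ℝ) 2, (x + y) ^ γ ≤ D) :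
    Cbeta β / D ≤ ∫ y in Ioo (1:ℝ) 2, y ^ β / (x + y) ^ γ := by
  have hcont : ContinuousOn (fun y : ℝ => y ^ β / (x + y) ^ γ) (Icc 1 2) := by
    apply ContinuousOn.div
    · exact continuousOn_id.rpow_const fun y hy => Or.inl (by
        have := hy.1; intro h; simp only [id_eq] at h; rw [h] at this; linarith)
    · exact (continuousOn_const.add continuousOn_id).rpow_const fun y hy => Or.inl (by
        have := hy.1; intro h; simp only [Pi.add_apply, id_eq] at h; nlinarith)
    · intro y hy
      have : (0:ℝ) < x + y := by have := hy.1; linarith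
      exact (Real.rpow_pos_of_pos this γ).ne'
  have hint : IntegrableOn (fun y : ℝ => y ^ β / (x + y) ^ γ) (Ioo (1:ℝ) 2) :=
    (hcont.integrableOn_Icc).mono_set Ioo_subset_Icc_self
  have hconst : IntegrableOn (fun _ : ℝ => Cbeta β / D) (Ioo (1:ℝ) 2) :=
    integrableOn_const measure_Ioo_lt_top.ne
  have hmono := setIntegral_mono_on hconst hint measurableSet_Ioo (by
    intro y hy
    have hy1 : (1:ℝ) < y := hy.1
    have hxy : 0 < (x + y) ^ γ := Real.rpow_pos_of_pos (by linarith) γ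
    have hyβ : Cbeta β ≤ y ^ β := aux_rpow_lb one_pos hy1.le hy.2.le
    rw [div_le_div_iff₀ hD hxy]
    exact mul_le_mul hyβ (hbound y hy) hxy.le (Real.rpow_nonneg (by linarith) β))
  calc Cbeta β / D = ∫ _ in Ioo (1:ℝ) 2, Cbeta β / D := by
        rw [setIntegral_const, Real.volume_real_Ioo]
        norm_num
    _ ≤ _ := hmono

lemma Hop_f0_lb1 {α β γ : ℝ} : ∀ x ∈ Ioo (0:ℝ) 1, c0 β γ * x ^ α ≤ Hop α β γ f0 x := by
  intro x hx
  rw [Hop_f0]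
  have hbound : ∀ y ∈ Ioo (1:ℝ) 2, (x + y) ^ γ ≤ Mgamma γ := by
    intro y hy
    exact aux_rpow_ub one_pos (by have := hx.1; have := hy.1; linarith)
      (by have := hx.2; have := hy.2; linarith)
  have h := integral_lb (x := x) (β := β) hx.1 (Mgamma_pos γ) hbound
  calc c0 β γ * x ^ α = x ^ α * (Cbeta β / Mgamma γ) := by rw [mul_comm]; rfl
    _ ≤ _ := mul_le_mul_of_nonneg_left h (Real.rpow_nonneg hx.1.le α)

lemma Hop_f0_lb2 {α β γ : ℝ} : ∀ x ∈ Ioi (1:ℝ), c0 β γ * x ^ (α - γ) ≤ Hop α β γ f0 x := by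
  intro x hx
  have hx0 : (0:ℝ) < x := lt_trans one_pos hx
  rw [Hop_f0]
  have hxγ : 0 < x ^ γ := Real.rpow_pos_of_pos hx0 γ
  have hbound : ∀ y ∈ Ioo (1:ℝ) 2, (x + y) ^ γ ≤ Mgamma γ * x ^ γ := by
    intro y hy
    have hy1 : (1:ℝ) < y := hy.1
    have hkey : x + y = x * ((x + y) / x) := by field_simp
    have ht1 : (1:ℝ) ≤ (x + y) / x := by
      rw [le_div_iff₀ hx0]; linarith
    have ht2 : (x + y) / x ≤ 3 := by
      rw [div_le_iff₀ hx0]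
      have := hy.2
      have hxx : (1:ℝ) < x := hx
      nlinarith
    calc (x + y) ^ γ = x ^ γ * ((x + y) / x) ^ γ := by
          rw [← Real.mul_rpow hx0.le (by positivity), ← hkey]
      _ ≤ x ^ γ * Mgamma γ :=
          mul_le_mul_of_nonneg_left (aux_rpow_ub one_pos ht1 ht2) hxγ.le
      _ = Mgamma γ * x ^ γ := mul_comm _ _
  have h := integral_lb (x := x) (β := β) hx0 (mul_pos (Mgamma_pos γ) hxγ) hbound
  calc c0 β γ * x ^ (α - γ) = x ^ α * (Cbeta β / (Mgamma γ * x ^ γ)) := by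
        rw [Real.rpow_sub hx0]
        unfold c0
        field_simp
    _ ≤ _ := mul_le_mul_of_nonneg_left h (Real.rpow_nonneg hx0.le α)

/-! ### `Wint` of the test function -/

lemma Wint_f0_eq {a p : ℝ} (hp : 0 < p) :
    Wint a p f0 = ∫⁻ x in Ioo (1:ℝ) 2, ENNReal.ofReal (x ^ a) := by
  unfold Wint
  have key : ∀ x : ℝ, ENNReal.ofReal (x ^ a) * (‖f0 x‖₊ : ℝ≥0∞) ^ p
      = (Ioo (1:ℝ) 2).indicator (fun x => ENNReal.ofReal (x ^ a)) x := by
    intro x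
    unfold f0
    by_cases hx : x ∈ Ioo (1:ℝ) 2
    · simp [hx]
    · simp [hx, ENNReal.zero_rpow_of_pos hp]
  simp_rw [key]
  have hsub : Ioo (1:ℝ) 2 ∩ Ioi 0 = Ioo (1:ℝ) 2 :=
    inter_eq_left.mpr fun y hy => lt_trans one_pos hy.1
  rw [lintegral_indicator measurableSet_Ioo, Measure.restrict_restrict measurableSet_Ioo, hsub]

lemma Wint_f0_ne_top {a p : ℝ} (hp : 0 < p) : Wint a p f0 ≠ ⊤ := by
  rw [Wint_f0_eq hp]
  refine ne_top_of_le_ne_top ?_ (setLIntegral_mono measurable_const (fun x hx =>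
    ENNReal.ofReal_le_ofReal (aux_rpow_ub one_pos hx.1.le hx.2.le)))
  rw [setLIntegral_const]
  exact ENNReal.mul_ne_top ENNReal.ofReal_ne_top measure_Ioo_lt_top.ne

lemma Wint_f0_ne_zero {a p : ℝ} (hp : 0 < p) : Wint a p f0 ≠ 0 := by
  rw [Wint_f0_eq hp]
  have h := setLIntegral_mono (μ := volume) (s := Ioo (1:ℝ) 2)
    (f := fun _ => ENNReal.ofReal (min ((1:ℝ) ^ a) (2 ^ a)))
    (g := fun x => ENNReal.ofReal (x ^ a)) (by fun_prop)
    (fun x hx => ENNReal.ofReal_le_ofReal (aux_rpow_lb one_pos hx.1.le hx.2.le))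
  rw [setLIntegral_const] at h
  refine ne_of_gt (lt_of_lt_of_le ?_ h)
  apply ENNReal.mul_pos
  · exact (ENNReal.ofReal_pos.mpr (lt_min (Real.rpow_pos_of_pos one_pos a)
      (Real.rpow_pos_of_pos two_pos a))).ne'
  · rw [Real.volume_Ioo]
    norm_num

/-! ### Scaling of `Hop` -/

lemma Hop_scale {α β γ : ℝ} (f : ℝ → ℝ) {l x : ℝ} (hl : 0 < l) (hx : 0 < x) :
    Hop α β γ (fun y => f (l * y)) x = l ^ (γ - β - 1 - α) * Hop α β γ f (l * x) := by
  unfold Hop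
  have h1 : ∫ y in Ioi (0:ℝ), f (l * y) * y ^ β / (x + y) ^ γ
      = l⁻¹ • ∫ u in Ioi (0:ℝ), f u * (l⁻¹ * u) ^ β / (x + l⁻¹ * u) ^ γ := by
    have h := integral_comp_mul_left_Ioi
      (fun u => f u * (l⁻¹ * u) ^ β / (x + l⁻¹ * u) ^ γ) 0 hl
    rw [mul_zero] at h
    rw [← h]
    congr 1
    funext y
    simp only [inv_mul_cancel_left₀ hl.ne']
  rw [h1]
  have h2 : ∫ u in Ioi (0:ℝ), f u * (l⁻¹ * u) ^ β / (x + l⁻¹ * u) ^ γ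
      = (l⁻¹ ^ β * l ^ γ) * ∫ u in Ioi (0:ℝ), f u * u ^ β / (l * x + u) ^ γ := by
    rw [← integral_const_mul]
    apply setIntegral_congr_fun measurableSet_Ioi
    intro u hu
    have hu0 : (0:ℝ) < u := hu
    have hxu : x + l⁻¹ * u = l⁻¹ * (l * x + u) := by field_simp
    show f u * (l⁻¹ * u) ^ β / (x + l⁻¹ * u) ^ γ
        = l⁻¹ ^ β * l ^ γ * (f u * u ^ β / (l * x + u) ^ γ)
    rw [hxu, Real.mul_rpow (inv_nonneg.mpr hl.le) hu0.le,
      Real.mul_rpow (inv_nonneg.mpr hl.le) (by positivity : (0:ℝ) ≤ l * x + u),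
      Real.inv_rpow hl.le γ]
    have hlγ : 0 < l ^ γ := Real.rpow_pos_of_pos hl γ
    have hden : 0 < (l * x + u) ^ γ := Real.rpow_pos_of_pos (by positivity) γ
    field_simp
  rw [h2]
  have hcoef : x ^ α * (l⁻¹ * (l⁻¹ ^ β * l ^ γ))
      = l ^ (γ - β - 1 - α) * (l * x) ^ α := by
    rw [Real.mul_rpow hl.le hx.le, Real.inv_rpow hl.le β, ← Real.rpow_neg hl.le β,
      ← Real.rpow_neg_one l, ← Real.rpow_add hl, ← Real.rpow_add hl,
      show l ^ (γ - β - 1 - α) * (l ^ α * x ^ α) = l ^ (γ - β - 1 - α) * l ^ α * x ^ α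
        from by ring, ← Real.rpow_add hl,
      show γ - β - 1 - α + α = -1 + (-β + γ) from by ring]
    exact mul_comm _ _
  rw [smul_eq_mul]
  calc x ^ α * (l⁻¹ * ((l⁻¹ ^ β * l ^ γ) * ∫ u in Ioi (0:ℝ), f u * u ^ β / (l * x + u) ^ γ))
      = (x ^ α * (l⁻¹ * (l⁻¹ ^ β * l ^ γ))) * ∫ u in Ioi (0:ℝ), f u * u ^ β / (l * x + u) ^ γ := by
        ring
    _ = _ := by rw [hcoef]; ring

/-! ### From finiteness of weighted integrals to exponent inequalities -/

lemma finite_to_exp_Ioo {s c : ℝ} (hc : 0 < c)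
    (h : ∫⁻ x in Ioo (0:ℝ) 1, ENNReal.ofReal (c * x ^ s) ≠ ⊤) : -1 < s := by
  have hint : IntegrableOn (fun x => c * x ^ s) (Ioo (0:ℝ) 1) := by
    constructor
    · exact (by fun_prop : Measurable fun x : ℝ => c * x ^ s).aestronglyMeasurable
    · rw [hasFiniteIntegral_iff_norm]
      have heq : ∫⁻ x in Ioo (0:ℝ) 1, ENNReal.ofReal ‖c * x ^ s‖
          = ∫⁻ x in Ioo (0:ℝ) 1, ENNReal.ofReal (c * x ^ s) := by
        apply setLIntegral_congr_fun measurableSet_Ioo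
        intro x hx
        dsimp only
        rw [Real.norm_eq_abs, abs_of_nonneg
          (mul_nonneg hc.le (Real.rpow_nonneg hx.1.le s))]
      rw [heq]
      exact lt_top_iff_ne_top.mpr h
  have : IntegrableOn (fun x : ℝ => x ^ s) (Ioo (0:ℝ) 1) := by
    have h2 := hint.const_mul c⁻¹
    have heq : (fun x : ℝ => c⁻¹ * (c * x ^ s)) = fun x : ℝ => x ^ s := by
      funext x; field_simp
    rwa [heq] at h2
  exact (intervalIntegral.integrableOn_Ioo_rpow_iff one_pos).mp this

lemma finite_to_exp_Ioi {s c : ℝ} (hc : 0 < c)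
    (h : ∫⁻ x in Ioi (1:ℝ), ENNReal.ofReal (c * x ^ s) ≠ ⊤) : s < -1 := by
  have hint : IntegrableOn (fun x => c * x ^ s) (Ioi (1:ℝ)) := by
    constructor
    · exact (by fun_prop : Measurable fun x : ℝ => c * x ^ s).aestronglyMeasurable
    · rw [hasFiniteIntegral_iff_norm]
      have heq : ∫⁻ x in Ioi (1:ℝ), ENNReal.ofReal ‖c * x ^ s‖
          = ∫⁻ x in Ioi (1:ℝ), ENNReal.ofReal (c * x ^ s) := by
        apply setLIntegral_congr_fun measurableSet_Ioi
        intro x hx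
        dsimp only
        rw [Real.norm_eq_abs, abs_of_nonneg
          (mul_nonneg hc.le (Real.rpow_nonneg (by linarith [mem_Ioi.mp hx]) s))]
      rw [heq]
      exact lt_top_iff_ne_top.mpr h
  have : IntegrableOn (fun x : ℝ => x ^ s) (Ioi (1:ℝ)) := by
    have h2 := hint.const_mul c⁻¹
    have heq : (fun x : ℝ => c⁻¹ * (c * x ^ s)) = fun x : ℝ => x ^ s := by
      funext x; field_simp
    rwa [heq] at h2
  exact (integrableOn_Ioi_rpow_iff one_pos).mp this

theorem stmt_7 (a b p q α β γ : ℝ) (ha : -1 < a) (hb : -1 < b) (hp : 1 ≤ p) (hpq : p ≤ q)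
    (hbdd : ∃ C : ℝ≥0∞, C ≠ ⊤ ∧ ∀ f : ℝ → ℝ, Measurable f →
        eLpNorm (Hop α β γ f) (ENNReal.ofReal q) (wMeasure b)
          ≤ C * eLpNorm f (ENNReal.ofReal p) (wMeasure a)) :
    γ = α + β + 1 + ((b + 1) / q - (a + 1) / p) ∧
      -q * α < b + 1 ∧ b + 1 < q * (γ - α) := by
  obtain ⟨C, hCtop, hC⟩ := hbdd
  have hq1 : (1:ℝ) ≤ q := hp.trans hpq
  have hq0 : (0:ℝ) < q := lt_of_lt_of_le one_pos hq1
  have hp0 : (0:ℝ) < p := lt_of_lt_of_le one_pos hp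
  have h0 := hC f0 f0_measurable
  rw [eLpNorm_wMeasure hq0, eLpNorm_wMeasure hp0] at h0
  set X := Wint b q (Hop α β γ f0) with hXdef
  set Y := Wint a p f0 with hYdef
  have hYtop : Y ≠ ⊤ := Wint_f0_ne_top hp0
  have hY0 : Y ≠ 0 := Wint_f0_ne_zero hp0
  have hRHStop : C * Y ^ (1/p) ≠ ⊤ :=
    ENNReal.mul_ne_top hCtop (ENNReal.rpow_ne_top_of_nonneg (by positivity) hYtop)
  have hXtop : X ≠ ⊤ := by
    by_contra hX
    rw [hX, ENNReal.top_rpow_of_pos (by positivity)] at h0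
    exact hRHStop (top_le_iff.mp h0)
  have hc0q : (0:ℝ) < (c0 β γ) ^ q := Real.rpow_pos_of_pos (c0_pos β γ) q
  -- behaviour near zero
  have hB1 : -q * α < b + 1 := by
    have hpt : ∀ x : ℝ, (Ioo (0:ℝ) 1).indicator
        (fun x => ENNReal.ofReal ((c0 β γ) ^ q * x ^ (α * q + b))) x
        ≤ ENNReal.ofReal (x ^ b) * (‖Hop α β γ f0 x‖₊ : ℝ≥0∞) ^ q := by
      intro x
      by_cases hx : x ∈ Ioo (0:ℝ) 1
      · rw [indicator_of_mem hx]
        have hx0 : (0:ℝ) < x := hx.1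
        have heq : (c0 β γ) ^ q * x ^ (α * q + b) = x ^ b * (c0 β γ * x ^ α) ^ q := by
          rw [Real.mul_rpow (c0_pos β γ).le (Real.rpow_nonneg hx0.le α),
            ← Real.rpow_mul hx0.le, Real.rpow_add hx0]
          ring
        rw [heq, ENNReal.ofReal_mul (Real.rpow_nonneg hx0.le b)]
        apply mul_le_mul_right
        rw [← ENNReal.ofReal_rpow_of_pos (mul_pos (c0_pos β γ) (Real.rpow_pos_of_pos hx0 α))]
        exact ENNReal.rpow_le_rpow (le_trans (ENNReal.ofReal_le_ofReal (Hop_f0_lb1 x hx))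
          (Real.ofReal_le_enorm _)) hq0.le
      · rw [indicator_of_notMem hx]; exact zero_le
    have h1 : (∫⁻ x in Ioi (0:ℝ), (Ioo (0:ℝ) 1).indicator
        (fun x => ENNReal.ofReal ((c0 β γ) ^ q * x ^ (α * q + b))) x) ≤ X :=
      lintegral_mono hpt
    have hsub : Ioo (0:ℝ) 1 ∩ Ioi 0 = Ioo (0:ℝ) 1 := inter_eq_left.mpr fun y hy => hy.1
    rw [lintegral_indicator measurableSet_Ioo, Measure.restrict_restrict measurableSet_Ioo,
      hsub] at h1
    have := finite_to_exp_Ioo hc0q (ne_top_of_le_ne_top hXtop h1)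
    linarith
  -- behaviour near infinity
  have hB2 : b + 1 < q * (γ - α) := by
    have hpt : ∀ x : ℝ, (Ioi (1:ℝ)).indicator
        (fun x => ENNReal.ofReal ((c0 β γ) ^ q * x ^ ((α - γ) * q + b))) x
        ≤ ENNReal.ofReal (x ^ b) * (‖Hop α β γ f0 x‖₊ : ℝ≥0∞) ^ q := by
      intro x
      by_cases hx : x ∈ Ioi (1:ℝ)
      · rw [indicator_of_mem hx]
        have hx0 : (0:ℝ) < x := lt_trans one_pos hx
        have heq : (c0 β γ) ^ q * x ^ ((α - γ) * q + b)
            = x ^ b * (c0 β γ * x ^ (α - γ)) ^ q := by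
          rw [Real.mul_rpow (c0_pos β γ).le (Real.rpow_nonneg hx0.le _),
            ← Real.rpow_mul hx0.le, Real.rpow_add hx0]
          ring
        rw [heq, ENNReal.ofReal_mul (Real.rpow_nonneg hx0.le b)]
        apply mul_le_mul_right
        rw [← ENNReal.ofReal_rpow_of_pos (mul_pos (c0_pos β γ) (Real.rpow_pos_of_pos hx0 _))]
        exact ENNReal.rpow_le_rpow (le_trans (ENNReal.ofReal_le_ofReal (Hop_f0_lb2 x hx))
          (Real.ofReal_le_enorm _)) hq0.le
      · rw [indicator_of_notMem hx]; exact zero_le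
    have h1 : (∫⁻ x in Ioi (0:ℝ), (Ioi (1:ℝ)).indicator
        (fun x => ENNReal.ofReal ((c0 β γ) ^ q * x ^ ((α - γ) * q + b))) x) ≤ X :=
      lintegral_mono hpt
    have hsub : Ioi (1:ℝ) ∩ Ioi 0 = Ioi (1:ℝ) :=
      inter_eq_left.mpr fun y hy => mem_Ioi.mpr (lt_trans one_pos hy)
    rw [lintegral_indicator measurableSet_Ioi, Measure.restrict_restrict measurableSet_Ioi,
      hsub] at h1
    have := finite_to_exp_Ioi hc0q (ne_top_of_le_ne_top hXtop h1)
    nlinarith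
  -- positivity of X
  have hX0 : X ≠ 0 := by
    have hr : (0:ℝ) < c0 β γ * min ((2⁻¹:ℝ) ^ α) ((1:ℝ) ^ α) :=
      mul_pos (c0_pos β γ) (lt_min (Real.rpow_pos_of_pos (by norm_num) α)
        (Real.rpow_pos_of_pos one_pos α))
    set r : ℝ := c0 β γ * min ((2⁻¹:ℝ) ^ α) ((1:ℝ) ^ α) with hrdef
    set m : ℝ≥0∞ := ENNReal.ofReal (min ((2⁻¹:ℝ) ^ b) ((1:ℝ) ^ b)) * ENNReal.ofReal r ^ q
      with hmdef
    have hm : m ≠ 0 := by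
      apply mul_ne_zero
      · exact (ENNReal.ofReal_pos.mpr (lt_min (Real.rpow_pos_of_pos (by norm_num) b)
          (Real.rpow_pos_of_pos one_pos b))).ne'
      · exact (ENNReal.rpow_pos (ENNReal.ofReal_pos.mpr hr) ENNReal.ofReal_ne_top).ne'
    have hpt : ∀ x : ℝ, (Ioo (2⁻¹:ℝ) 1).indicator (fun _ => m) x
        ≤ ENNReal.ofReal (x ^ b) * (‖Hop α β γ f0 x‖₊ : ℝ≥0∞) ^ q := by
      intro x
      by_cases hx : x ∈ Ioo (2⁻¹:ℝ) 1
      · rw [indicator_of_mem hx]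
        have hx01 : x ∈ Ioo (0:ℝ) 1 := ⟨lt_trans (by norm_num) hx.1, hx.2⟩
        have h1 : r ≤ Hop α β γ f0 x := by
          refine le_trans ?_ (Hop_f0_lb1 x hx01)
          exact mul_le_mul_of_nonneg_left
            (aux_rpow_lb (by norm_num) hx.1.le hx01.2.le) (c0_pos β γ).le
        have h2 : ENNReal.ofReal r ^ q ≤ (‖Hop α β γ f0 x‖₊ : ℝ≥0∞) ^ q :=
          ENNReal.rpow_le_rpow (le_trans (ENNReal.ofReal_le_ofReal h1)
            (Real.ofReal_le_enorm _)) hq0.le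
        exact mul_le_mul' (ENNReal.ofReal_le_ofReal
          (aux_rpow_lb (by norm_num) hx.1.le hx.2.le)) h2
      · rw [indicator_of_notMem hx]; exact zero_le
    have h1 : (∫⁻ x in Ioi (0:ℝ), (Ioo (2⁻¹:ℝ) 1).indicator (fun _ => m) x) ≤ X :=
      lintegral_mono hpt
    have hsub : Ioo (2⁻¹:ℝ) 1 ∩ Ioi 0 = Ioo (2⁻¹:ℝ) 1 :=
      inter_eq_left.mpr fun y hy => lt_trans (by norm_num) hy.1
    rw [lintegral_indicator measurableSet_Ioo, setLIntegral_const,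
      Measure.restrict_apply measurableSet_Ioo, hsub, Real.volume_Ioo] at h1
    intro hX
    rw [hX, le_zero_iff] at h1
    rcases mul_eq_zero.mp h1 with h | h
    · exact hm h
    · rw [ENNReal.ofReal_eq_zero] at h; norm_num at h
  -- the scaling inequality
  have hkey : ∀ l : ℝ, 0 < l →
      ENNReal.ofReal (l ^ (γ - β - 1 - α - (b+1)/q)) * X ^ (1/q)
        ≤ ENNReal.ofReal (l ^ (-((a+1)/p))) * (C * Y ^ (1/p)) := by
    intro l hl
    have h := hC (fun y => f0 (l * y)) (f0_measurable.comp (measurable_const_mul l))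
    rw [eLpNorm_wMeasure hq0, eLpNorm_wMeasure hp0] at h
    have hW1 : Wint b q (Hop α β γ (fun y => f0 (l * y)))
        = ENNReal.ofReal (l ^ ((γ - β - 1 - α) * q - (1 + b))) * X := by
      have e1 : Wint b q (Hop α β γ (fun y => f0 (l * y)))
          = Wint b q (fun x => l ^ (γ - β - 1 - α) * Hop α β γ f0 (l * x)) :=
        Wint_congr (fun x hx => Hop_scale f0 hl hx)
      rw [e1]
      calc Wint b q (fun x => l ^ (γ - β - 1 - α) * Hop α β γ f0 (l * x))
          = ENNReal.ofReal (l ^ (γ - β - 1 - α)) ^ q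
              * Wint b q (fun x => Hop α β γ f0 (l * x)) :=
            Wint_const_mul hq0.le (Real.rpow_nonneg hl.le _) (fun x => Hop α β γ f0 (l * x))
        _ = ENNReal.ofReal (l ^ (γ - β - 1 - α)) ^ q
              * (ENNReal.ofReal (l⁻¹ * l⁻¹ ^ b) * X) := by
            rw [Wint_scale (Hop α β γ f0) hl]
        _ = ENNReal.ofReal (l ^ ((γ - β - 1 - α) * q - (1 + b))) * X := by
            rw [ENNReal.ofReal_rpow_of_pos (Real.rpow_pos_of_pos hl _),
              ← Real.rpow_mul hl.le, ← mul_assoc,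
              ← ENNReal.ofReal_mul (Real.rpow_nonneg hl.le _)]
            congr 2
            rw [Real.inv_rpow hl.le, ← Real.rpow_neg hl.le, ← Real.rpow_neg_one l,
              ← Real.rpow_add hl, ← Real.rpow_add hl]
            congr 1
            ring
    have hW2 : Wint a p (fun y => f0 (l * y))
        = ENNReal.ofReal (l ^ (-(1 + a))) * Y := by
      rw [Wint_scale f0 hl]
      congr 2
      rw [Real.inv_rpow hl.le, ← Real.rpow_neg hl.le, ← Real.rpow_neg_one l,
        ← Real.rpow_add hl]
      congr 1
      ring
    rw [hW1, hW2] at h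
    rw [ENNReal.mul_rpow_of_nonneg _ _ (by positivity : (0:ℝ) ≤ 1/q),
      ENNReal.mul_rpow_of_nonneg _ _ (by positivity : (0:ℝ) ≤ 1/p),
      ENNReal.ofReal_rpow_of_pos (Real.rpow_pos_of_pos hl _),
      ENNReal.ofReal_rpow_of_pos (Real.rpow_pos_of_pos hl _),
      ← Real.rpow_mul hl.le, ← Real.rpow_mul hl.le] at h
    have he1 : ((γ - β - 1 - α) * q - (1 + b)) * (1/q) = γ - β - 1 - α - (b+1)/q := by
      field_simp
      ring
    have he2 : -(1 + a) * (1/p) = -((a+1)/p) := by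
      rw [neg_mul, mul_one_div, add_comm 1 a]
    rw [he1, he2] at h
    calc ENNReal.ofReal (l ^ (γ - β - 1 - α - (b+1)/q)) * X ^ (1/q) ≤ _ := h
      _ = ENNReal.ofReal (l ^ (-((a+1)/p))) * (C * Y ^ (1/p)) := by ring
  -- pass to real numbers
  have hXq_ne_top : X ^ (1/q) ≠ ⊤ := ENNReal.rpow_ne_top_of_nonneg (by positivity) hXtop
  have hXq_ne_zero : X ^ (1/q) ≠ 0 := by
    intro h
    rcases ENNReal.rpow_eq_zero_iff.mp h with ⟨h1, _⟩ | ⟨h1, _⟩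
    · exact hX0 h1
    · exact hXtop h1
  have hT : 0 < (X ^ (1/q)).toReal := ENNReal.toReal_pos hXq_ne_zero hXq_ne_top
  have hreal : ∀ l : ℝ, 0 < l →
      l ^ (γ - β - 1 - α - (b+1)/q) * (X ^ (1/q)).toReal
        ≤ l ^ (-((a+1)/p)) * (C * Y ^ (1/p)).toReal := by
    intro l hl
    have h2 := ENNReal.toReal_mono (ENNReal.mul_ne_top ENNReal.ofReal_ne_top hRHStop)
      (hkey l hl)
    rwa [ENNReal.toReal_mul, ENNReal.toReal_mul,
      ENNReal.toReal_ofReal (Real.rpow_nonneg hl.le _),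
      ENNReal.toReal_ofReal (Real.rpow_nonneg hl.le _)] at h2
  have ht0 : (γ - β - 1 - α - (b+1)/q) - (-((a+1)/p)) = 0 := by
    apply aux_rpow_all_le (K := (C * Y ^ (1/p)).toReal / (X ^ (1/q)).toReal)
    intro l hl
    rw [Real.rpow_sub hl, div_le_div_iff₀ (Real.rpow_pos_of_pos hl _) hT]
    have := hreal l hl
    nlinarith [Real.rpow_pos_of_pos hl (-((a+1)/p))]
  exact ⟨by linarith, hB1, hB2⟩
end

section
/- Let 1 ≤ q < ∞, a, b > -1, and suppose γ = α + β - a + (b+1)/q and β + 1 - γ < a + 1 < β + 1. Then H_{α,β,γ} is bounded from L¹((0,∞), y^a dy) to L^q((0,∞), y^b dy). -/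
open MeasureTheory Set ENNReal

lemma model_integrableOn {s r : ℝ} (hs : -1 < s) (hsr : s + 1 < r) :
    IntegrableOn (fun t : ℝ => t ^ s * (1 + t) ^ (-r)) (Ioi (0:ℝ)) := by
  have hmeas : Measurable (fun t : ℝ => t ^ s * (1 + t) ^ (-r)) := by fun_prop
  have h01 : IntegrableOn (fun t : ℝ => t ^ s * (1 + t) ^ (-r)) (Ioc (0:ℝ) 1) := by
    have hint : IntegrableOn (fun t : ℝ => t ^ s) (Ioc (0:ℝ) 1) :=
      (intervalIntegrable_iff_integrableOn_Ioc_of_le (by norm_num)).1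
        (intervalIntegral.intervalIntegrable_rpow' hs)
    refine hint.mono' hmeas.aestronglyMeasurable ?_
    refine (ae_restrict_iff' measurableSet_Ioc).2 (ae_of_all _ fun t ht => ?_)
    have ht0 : 0 < t := ht.1
    have hbnd : (1 + t) ^ (-r) ≤ 1 :=
      Real.rpow_le_one_of_one_le_of_nonpos (by linarith) (by linarith)
    rw [Real.norm_eq_abs, abs_of_nonneg (by positivity)]
    calc t ^ s * (1 + t) ^ (-r) ≤ t ^ s * 1 :=
          mul_le_mul_of_nonneg_left hbnd (by positivity)
      _ = t ^ s := mul_one _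
  have h1i : IntegrableOn (fun t : ℝ => t ^ s * (1 + t) ^ (-r)) (Ioi (1:ℝ)) := by
    have hint : IntegrableOn (fun t : ℝ => t ^ (s - r)) (Ioi (1:ℝ)) :=
      integrableOn_Ioi_rpow_of_lt (by linarith) one_pos
    refine hint.mono' hmeas.aestronglyMeasurable ?_
    refine (ae_restrict_iff' measurableSet_Ioi).2 (ae_of_all _ fun t ht => ?_)
    have ht0 : (0:ℝ) < t := lt_trans one_pos ht
    have hbnd : (1 + t) ^ (-r) ≤ t ^ (-r) :=
      Real.rpow_le_rpow_of_nonpos ht0 (by linarith) (by linarith)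
    rw [Real.norm_eq_abs, abs_of_nonneg (by positivity)]
    calc t ^ s * (1 + t) ^ (-r) ≤ t ^ s * t ^ (-r) :=
          mul_le_mul_of_nonneg_left hbnd (by positivity)
      _ = t ^ (s - r) := by rw [← Real.rpow_add ht0]; ring_nf
  have hu : Ioc (0:ℝ) 1 ∪ Ioi 1 = Ioi 0 := Ioc_union_Ioi_eq_Ioi (by norm_num)
  rw [← hu]
  exact h01.union h1i

lemma kernel_pointwise {α β γ a b q : ℝ} (e : γ * q = (α + β - a) * q + b + 1)
    {x y : ℝ} (hx : 0 < x) (hy : 0 < y) :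
    (x ^ α * (y ^ β / (x + y) ^ γ)) ^ q * x ^ b
      = y ^ (a * q - 1) * ((y⁻¹ * x) ^ (α * q + b) * (1 + y⁻¹ * x) ^ (-(γ * q))) := by
  have hxy : 0 < x + y := by linarith
  have h2 : (1:ℝ) + y⁻¹ * x = (x + y) / y := by field_simp; ring
  have l1 : x ^ α * (y ^ β / (x + y) ^ γ)
      = Real.exp (Real.log x * α + (Real.log y * β - Real.log (x + y) * γ)) := by
    rw [Real.rpow_def_of_pos hx, Real.rpow_def_of_pos hy, Real.rpow_def_of_pos hxy,
      ← Real.exp_sub, ← Real.exp_add]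
  have l3 : Real.log (y⁻¹ * x) = Real.log x - Real.log y := by
    rw [Real.log_mul (inv_ne_zero hy.ne') hx.ne', Real.log_inv]; ring
  have l4 : Real.log ((x + y) / y) = Real.log (x + y) - Real.log y :=
    Real.log_div hxy.ne' hy.ne'
  rw [l1, ← Real.exp_mul, Real.rpow_def_of_pos hx, Real.rpow_def_of_pos hy,
    Real.rpow_def_of_pos (by positivity : (0:ℝ) < y⁻¹ * x), h2,
    Real.rpow_def_of_pos (by positivity : (0:ℝ) < (x + y) / y), l3, l4,
    ← Real.exp_add, ← Real.exp_add, ← Real.exp_add, Real.exp_eq_exp]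
  linear_combination (-Real.log y) * e

lemma kernel_bound {α β γ a : ℝ} (hba : a ≤ β) (hg : β - a ≤ γ)
    {x y : ℝ} (hx : 0 < x) (hy : 0 < y) :
    x ^ α * (y ^ β / (x + y) ^ γ) ≤ x ^ (α + (β - a - γ)) * y ^ a := by
  have hxy : 0 < x + y := by linarith
  have e1 : y ^ β = y ^ a * y ^ (β - a) := by
    rw [← Real.rpow_add hy]; ring_nf
  have e2 : y ^ (β - a) ≤ (x + y) ^ (β - a) :=
    Real.rpow_le_rpow hy.le (by linarith) (by linarith)
  have e4 : (x + y) ^ (β - a - γ) ≤ x ^ (β - a - γ) :=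
    Real.rpow_le_rpow_of_nonpos hx (by linarith) (by linarith)
  have e3 : (x + y) ^ (β - a) / (x + y) ^ γ = (x + y) ^ (β - a - γ) := by
    rw [← Real.rpow_sub hxy]
  calc x ^ α * (y ^ β / (x + y) ^ γ)
      = x ^ α * y ^ a * (y ^ (β - a) / (x + y) ^ γ) := by rw [e1]; ring
    _ ≤ x ^ α * y ^ a * ((x + y) ^ (β - a) / (x + y) ^ γ) := by
        gcongr
    _ = x ^ α * y ^ a * (x + y) ^ (β - a - γ) := by rw [e3]
    _ ≤ x ^ α * y ^ a * x ^ (β - a - γ) :=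
        mul_le_mul_of_nonneg_left e4 (by positivity)
    _ = x ^ (α + (β - a - γ)) * y ^ a := by rw [Real.rpow_add hx]; ring

lemma scaling {α β γ a b q : ℝ} (hq0 : 0 < q) (e : γ * q = (α + β - a) * q + b + 1)
    (hs : -1 < α * q + b) (hsr : α * q + b + 1 < γ * q) {y : ℝ} (hy : 0 < y) :
    ∫⁻ x in Ioi (0:ℝ), ENNReal.ofReal ((x ^ α * (y ^ β / (x + y) ^ γ)) ^ q * x ^ b)
      = ENNReal.ofReal (y ^ (a * q))
        * ENNReal.ofReal (∫ t in Ioi (0:ℝ), t ^ (α * q + b) * (1 + t) ^ (-(γ * q))) := by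
  have hmint := model_integrableOn hs hsr
  have hcomp0 : IntegrableOn
      (fun x : ℝ => (y⁻¹ * x) ^ (α * q + b) * (1 + y⁻¹ * x) ^ (-(γ * q))) (Ioi (0:ℝ)) := by
    have h := integrableOn_Ioi_comp_mul_left_iff
      (fun t : ℝ => t ^ (α * q + b) * (1 + t) ^ (-(γ * q))) 0 (inv_pos.2 hy)
    rw [mul_zero] at h
    exact h.2 hmint
  have hcomp : IntegrableOn
      (fun x : ℝ => y ^ (a * q - 1) * ((y⁻¹ * x) ^ (α * q + b) * (1 + y⁻¹ * x) ^ (-(γ * q))))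
      (Ioi (0:ℝ)) := hcomp0.const_mul _
  rw [setLIntegral_congr_fun measurableSet_Ioi
    (fun x hx => by rw [kernel_pointwise e hx hy])]
  rw [← ofReal_integral_eq_lintegral_ofReal hcomp ?_]
  · have hch : ∫ x in Ioi (0:ℝ),
        y ^ (a * q - 1) * ((y⁻¹ * x) ^ (α * q + b) * (1 + y⁻¹ * x) ^ (-(γ * q)))
        = y ^ (a * q - 1) * (y * ∫ t in Ioi (0:ℝ), t ^ (α * q + b) * (1 + t) ^ (-(γ * q))) := by
      rw [MeasureTheory.integral_const_mul]
      congr 1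
      have := MeasureTheory.integral_comp_mul_left_Ioi
        (fun t : ℝ => t ^ (α * q + b) * (1 + t) ^ (-(γ * q))) 0 (inv_pos.2 hy)
      simpa [mul_zero, inv_inv, smul_eq_mul] using this
    rw [hch]
    have hyy : y ^ (a * q - 1) * y = y ^ (a * q) := by
      rw [← Real.rpow_add_one hy.ne']; ring_nf
    rw [show y ^ (a * q - 1) * (y * ∫ t in Ioi (0:ℝ), t ^ (α * q + b) * (1 + t) ^ (-(γ * q)))
        = (y ^ (a * q - 1) * y) * ∫ t in Ioi (0:ℝ), t ^ (α * q + b) * (1 + t) ^ (-(γ * q)) by ring,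
      hyy, ENNReal.ofReal_mul (by positivity)]
  · refine (ae_restrict_iff' measurableSet_Ioi).2 (ae_of_all _ fun x hx => ?_)
    have hx0 : (0:ℝ) < x := hx
    positivity

theorem stmt_10 (a b q α β γ : ℝ) (ha : -1 < a) (hb : -1 < b) (hq : 1 ≤ q)
    (hγ : γ = α + β - a + (b + 1) / q)
    (h1 : β + 1 - γ < a + 1) (h2 : a + 1 < β + 1) :
    ∃ C : ℝ≥0∞, C ≠ ⊤ ∧ ∀ f : ℝ → ℝ, Measurable f →
      eLpNorm (Hop α β γ f) (ENNReal.ofReal q) (wMeasure b)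
        ≤ C * eLpNorm f 1 (wMeasure a) := by
  have hq0 : 0 < q := lt_of_lt_of_le one_pos hq
  have hqne : q ≠ 0 := hq0.ne'
  have e : γ * q = (α + β - a) * q + b + 1 := by
    rw [hγ]; field_simp; ring
  have hba : a < β := by linarith
  have hbg : β - a < γ := by linarith
  have hs : -1 < α * q + b := by
    nlinarith [mul_pos (show (0:ℝ) < γ - (β - a) by linarith) hq0]
  have hsr : α * q + b + 1 < γ * q := by
    nlinarith [mul_pos (show (0:ℝ) < β - a by linarith) hq0]
  set A : ℝ≥0∞ :=
    ENNReal.ofReal (∫ t in Ioi (0:ℝ), t ^ (α * q + b) * (1 + t) ^ (-(γ * q))) with hA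
  refine ⟨A ^ (1/q) + 1, ?_, ?_⟩
  · exact ENNReal.add_ne_top.2
      ⟨ENNReal.rpow_ne_top_of_nonneg (by positivity) ofReal_ne_top, one_ne_top⟩
  intro f hf
  set K : ℝ → ℝ → ℝ≥0∞ :=
    fun x y => ENNReal.ofReal (x ^ α * (y ^ β / (x + y) ^ γ)) with hK
  set g : ℝ → ℝ≥0∞ := fun y => (‖f y‖₊ : ℝ≥0∞) with hgdef
  have hg : Measurable g := hf.nnnorm.coe_nnreal_ennreal
  have hKm : Measurable (Function.uncurry K) := by
    apply Measurable.ennreal_ofReal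
    fun_prop
  have hKm1 : ∀ y : ℝ, Measurable (fun x => K x y) :=
    fun y => hKm.comp (measurable_id.prodMk measurable_const)
  have hKm2 : ∀ x : ℝ, Measurable (fun y => K x y) :=
    fun x => hKm.comp (measurable_const.prodMk measurable_id)
  set Φ : ℝ → ℝ≥0∞ := fun x => ∫⁻ y in Ioi (0:ℝ), g y * K x y with hΦdef
  have hGm : Measurable (Function.uncurry fun x y => g y * K x y) :=
    (hg.comp measurable_snd).mul hKm
  have hΦ : Measurable Φ := Measurable.lintegral_prod_right hGm
  set w : ℝ → ℝ≥0∞ := fun x => ENNReal.ofReal (x ^ b) with hw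
  have hwm : Measurable w := by
    apply Measurable.ennreal_ofReal; fun_prop
  set I : ℝ≥0∞ := ∫⁻ y in Ioi (0:ℝ), ENNReal.ofReal (y ^ a) * g y with hI
  have hIeq : eLpNorm f 1 (wMeasure a) = I := by
    rw [eLpNorm_one_eq_lintegral_enorm, wMeasure,
      lintegral_withDensity_eq_lintegral_mul_non_measurable _
        (by apply Measurable.ennreal_ofReal; fun_prop)
        (ae_of_all _ fun x => ofReal_lt_top)]
    rfl
  have hLeq : eLpNorm (Hop α β γ f) (ENNReal.ofReal q) (wMeasure b)
      = (∫⁻ x in Ioi (0:ℝ), w x * (‖Hop α β γ f x‖₊ : ℝ≥0∞) ^ q) ^ (1/q) := by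
    rw [eLpNorm_eq_lintegral_rpow_enorm_toReal (ENNReal.ofReal_pos.2 hq0).ne' ofReal_ne_top,
      ENNReal.toReal_ofReal hq0.le, wMeasure,
      lintegral_withDensity_eq_lintegral_mul_non_measurable _
        (by apply Measurable.ennreal_ofReal; fun_prop)
        (ae_of_all _ fun x => ofReal_lt_top)]
    rfl
  -- pointwise bound
  have hHle : ∀ x ∈ Ioi (0:ℝ), (‖Hop α β γ f x‖₊ : ℝ≥0∞) ≤ Φ x := by
    intro x hx
    have hx0 : (0:ℝ) < x := hx
    calc (‖Hop α β γ f x‖₊ : ℝ≥0∞)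
        = ENNReal.ofReal (x ^ α)
            * (‖∫ y in Ioi (0:ℝ), f y * y ^ β / (x + y) ^ γ‖₊ : ℝ≥0∞) := by
          rw [Hop, nnnorm_mul, ENNReal.coe_mul,
            ← enorm_eq_nnnorm (x ^ α), Real.enorm_eq_ofReal (by positivity : (0:ℝ) ≤ x ^ α)]
      _ ≤ ENNReal.ofReal (x ^ α)
            * ∫⁻ y in Ioi (0:ℝ), (‖f y * y ^ β / (x + y) ^ γ‖₊ : ℝ≥0∞) :=
          mul_le_mul_right (enorm_integral_le_lintegral_enorm _) _
      _ = ∫⁻ y in Ioi (0:ℝ),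
            ENNReal.ofReal (x ^ α) * (‖f y * y ^ β / (x + y) ^ γ‖₊ : ℝ≥0∞) :=
          (lintegral_const_mul _ (by fun_prop)).symm
      _ ≤ Φ x := by
          refine le_of_eq (setLIntegral_congr_fun measurableSet_Ioi
            (fun y hy => ?_))
          have hy0 : (0:ℝ) < y := hy
          have hKxy : K x y
              = ENNReal.ofReal (x ^ α) * ENNReal.ofReal (y ^ β / (x + y) ^ γ) :=
            ENNReal.ofReal_mul (by positivity)
          rw [mul_div_assoc, nnnorm_mul, ENNReal.coe_mul,
            ← enorm_eq_nnnorm (y ^ β / (x + y) ^ γ),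
            Real.enorm_eq_ofReal (by positivity : (0:ℝ) ≤ y ^ β / (x + y) ^ γ),
            hKxy]
          ring
  -- scaling in ENNReal form
  have hscale : ∀ y : ℝ, 0 < y →
      (∫⁻ x in Ioi (0:ℝ), w x * K x y ^ q) = ENNReal.ofReal (y ^ a) ^ q * A := by
    intro y hy
    have h1 : ∀ x ∈ Ioi (0:ℝ), w x * K x y ^ q
        = ENNReal.ofReal ((x ^ α * (y ^ β / (x + y) ^ γ)) ^ q * x ^ b) := by
      intro x hx
      have hx0 : (0:ℝ) < x := hx
      have hKxy : K x y = ENNReal.ofReal (x ^ α * (y ^ β / (x + y) ^ γ)) := rfl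
      have hwx : w x = ENNReal.ofReal (x ^ b) := rfl
      rw [hKxy, hwx,
        ENNReal.ofReal_rpow_of_pos (show 0 < x ^ α * (y ^ β / (x + y) ^ γ) by positivity),
        ENNReal.ofReal_mul (show (0:ℝ) ≤ (x ^ α * (y ^ β / (x + y) ^ γ)) ^ q by positivity)]
      ring
    rw [setLIntegral_congr_fun measurableSet_Ioi h1,
      scaling hq0 e hs hsr hy, ← hA]
    congr 1
    rw [ENNReal.ofReal_rpow_of_pos (Real.rpow_pos_of_pos hy a), ← Real.rpow_mul hy.le]
  -- kernel bound
  have hKb : ∀ x ∈ Ioi (0:ℝ), ∀ y ∈ Ioi (0:ℝ),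
      K x y ≤ ENNReal.ofReal (x ^ (α + (β - a - γ))) * ENNReal.ofReal (y ^ a) := by
    intro x hx y hy
    have hx0 : (0:ℝ) < x := hx
    have hKxy : K x y = ENNReal.ofReal (x ^ α * (y ^ β / (x + y) ^ γ)) := rfl
    rw [hKxy, ← ENNReal.ofReal_mul (show (0:ℝ) ≤ x ^ (α + (β - a - γ)) by positivity)]
    exact ENNReal.ofReal_le_ofReal (kernel_bound hba.le hbg.le hx hy)
  rw [hIeq, hLeq]
  by_cases hItop : I = ⊤
  · rw [hItop, ENNReal.mul_top (by simp)]
    exact le_top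
  -- finiteness of Φ
  have hΦfin : ∀ x ∈ Ioi (0:ℝ), Φ x ≠ ⊤ := by
    intro x hx
    have hle : Φ x ≤ ENNReal.ofReal (x ^ (α + (β - a - γ))) * I := by
      calc Φ x ≤ ∫⁻ y in Ioi (0:ℝ),
            g y * (ENNReal.ofReal (x ^ (α + (β - a - γ))) * ENNReal.ofReal (y ^ a)) := by
            refine setLIntegral_mono_ae (by fun_prop) (ae_of_all _ fun y hy => ?_)
            exact mul_le_mul_right (hKb x hx y hy) _
        _ = ∫⁻ y in Ioi (0:ℝ),
            ENNReal.ofReal (x ^ (α + (β - a - γ))) * (ENNReal.ofReal (y ^ a) * g y) := by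
            apply lintegral_congr; intro y; ring
        _ = ENNReal.ofReal (x ^ (α + (β - a - γ))) * I := by
            rw [hI, lintegral_const_mul _ (by fun_prop)]
    exact ne_top_of_le_ne_top (ENNReal.mul_ne_top ofReal_ne_top hItop) hle
  -- truncation
  set T : ℕ → Set ℝ :=
    fun n => Ioc ((n:ℝ)+1)⁻¹ ((n:ℝ)+1) ∩ {x | Φ x ≤ (n:ℝ≥0∞)} with hT
  have hTm : ∀ n, MeasurableSet (T n) :=
    fun n => measurableSet_Ioc.inter (hΦ measurableSet_Iic)
  have hTsub : ∀ n, T n ⊆ Ioi (0:ℝ) := by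
    intro n x hx
    exact lt_trans (by positivity) hx.1.1
  have hTmono : Monotone T := by
    intro m n hmn
    apply inter_subset_inter
    · apply Ioc_subset_Ioc
      · apply inv_anti₀ (by positivity)
        have : (m:ℝ) ≤ (n:ℝ) := Nat.cast_le.2 hmn
        linarith
      · have : (m:ℝ) ≤ (n:ℝ) := Nat.cast_le.2 hmn
        linarith
    · intro x hx
      simp only [mem_setOf_eq] at hx ⊢
      exact le_trans hx (Nat.cast_le.2 hmn)
  have hTcover : Ioi (0:ℝ) ⊆ ⋃ n, T n := by
    intro x hx
    have hx0 : (0:ℝ) < x := hx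
    obtain ⟨n1, hn1⟩ := ENNReal.exists_nat_gt (hΦfin x hx)
    obtain ⟨n2, hn2⟩ := exists_nat_gt (max x x⁻¹)
    have hm1 : x ≤ ((n1+n2:ℕ):ℝ) + 1 := by
      have := lt_of_le_of_lt (le_max_left x x⁻¹) hn2
      push_cast
      nlinarith [Nat.cast_nonneg (α := ℝ) n1]
    have hm2 : (((n1+n2:ℕ):ℝ) + 1)⁻¹ < x := by
      have h1 : x⁻¹ < ((n1+n2:ℕ):ℝ) + 1 := by
        have := lt_of_le_of_lt (le_max_right x x⁻¹) hn2
        push_cast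
        nlinarith [Nat.cast_nonneg (α := ℝ) n1]
      calc (((n1+n2:ℕ):ℝ) + 1)⁻¹ < (x⁻¹)⁻¹ :=
            inv_strictAnti₀ (inv_pos.2 hx0) h1
        _ = x := inv_inv x
    refine mem_iUnion.2 ⟨n1 + n2, ⟨⟨hm2, hm1⟩, ?_⟩⟩
    show Φ x ≤ ((n1 + n2 : ℕ) : ℝ≥0∞)
    exact le_trans hn1.le (Nat.cast_le.2 (Nat.le_add_right n1 n2))
  set F : ℝ → ℝ≥0∞ := fun x => w x * Φ x ^ q with hF
  have hFm : Measurable F := by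
    apply hwm.mul
    exact hΦ.pow_const q
  set J : ℕ → ℝ≥0∞ := fun n => ∫⁻ x in T n, F x with hJ
  have hmc : (∫⁻ x in Ioi (0:ℝ), F x) = ⨆ n, J n := by
    have hunion : (⋃ n, T n) = Ioi (0:ℝ) :=
      subset_antisymm (iUnion_subset hTsub) hTcover
    rw [← hunion, ← lintegral_indicator (MeasurableSet.iUnion hTm)]
    have hptw : ∀ x, (⋃ n, T n).indicator F x = ⨆ n, (T n).indicator F x := by
      intro x
      by_cases hx : x ∈ ⋃ n, T n
      · obtain ⟨n, hn⟩ := mem_iUnion.1 hx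
        rw [indicator_of_mem hx]
        refine le_antisymm (le_iSup_of_le n (le_of_eq (indicator_of_mem hn F).symm))
          (iSup_le fun m => indicator_le_self _ _ _)
      · rw [indicator_of_notMem hx]
        symm
        refine iSup_eq_zero.2 fun n => ?_
        exact indicator_of_notMem (fun h => hx (mem_iUnion.2 ⟨n, h⟩)) F
    rw [lintegral_congr hptw,
      lintegral_iSup (fun n => hFm.indicator (hTm n))
        (fun m n h => indicator_le_indicator_of_subset (hTmono h) (fun _ => zero_le))]
    exact iSup_congr fun n => lintegral_indicator (hTm n) F
  have hJfin : ∀ n, J n ≠ ⊤ := by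
    intro n
    set c : ℝ≥0∞ :=
      ENNReal.ofReal (max ((((n:ℝ)+1)⁻¹) ^ b) (((n:ℝ)+1) ^ b)) * (n:ℝ≥0∞) ^ q with hc
    have hcb : ∀ x ∈ T n, F x ≤ c := by
      intro x hx
      obtain ⟨⟨hx1, hx2⟩, hx3⟩ := hx
      have hx0 : (0:ℝ) < x := lt_trans (by positivity) hx1
      refine mul_le_mul' ?_ (ENNReal.rpow_le_rpow hx3 hq0.le)
      apply ENNReal.ofReal_le_ofReal
      rcases le_or_gt 0 b with hb' | hb'
      · exact le_max_of_le_right (Real.rpow_le_rpow hx0.le hx2 hb')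
      · exact le_max_of_le_left
          (Real.rpow_le_rpow_of_nonpos (by positivity) hx1.le hb'.le)
    have hle : J n ≤ c * volume (T n) := by
      rw [hJ]
      calc (∫⁻ x in T n, F x) ≤ ∫⁻ _x in T n, c :=
            setLIntegral_mono_ae aemeasurable_const (ae_of_all _ hcb)
        _ = c * volume (T n) := by rw [setLIntegral_const]
    refine ne_top_of_le_ne_top (ENNReal.mul_ne_top ?_ ?_) hle
    · exact ENNReal.mul_ne_top ofReal_ne_top
        (ENNReal.rpow_ne_top_of_nonneg hq0.le (ENNReal.natCast_ne_top n))
    · refine ne_top_of_le_ne_top ?_ (measure_mono inter_subset_left)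
      rw [Real.volume_Ioc]
      exact ofReal_ne_top
  -- main estimate
  have hmain : (∫⁻ x in Ioi (0:ℝ), F x) ≤ (A ^ (1/q) * I) ^ q := by
    rcases eq_or_lt_of_le hq with hq1 | hq1
    · -- q = 1
      have hqe : q = 1 := hq1.symm
      subst hqe
      rw [show (1:ℝ)/1 = (1:ℝ) by norm_num, ENNReal.rpow_one, ENNReal.rpow_one]
      refine le_of_eq ?_
      calc (∫⁻ x in Ioi (0:ℝ), F x)
          = ∫⁻ x in Ioi (0:ℝ), ∫⁻ y in Ioi (0:ℝ), w x * (g y * K x y) := by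
            refine lintegral_congr fun x => ?_
            simp only [hF, ENNReal.rpow_one]
            exact (lintegral_const_mul _ (hg.mul (hKm2 x))).symm
        _ = ∫⁻ y in Ioi (0:ℝ), ∫⁻ x in Ioi (0:ℝ), w x * (g y * K x y) := by
            apply lintegral_lintegral_swap
            exact ((hwm.comp measurable_fst).mul
              ((hg.comp measurable_snd).mul hKm)).aemeasurable
        _ = ∫⁻ y in Ioi (0:ℝ), g y * ∫⁻ x in Ioi (0:ℝ), w x * K x y := by
            refine lintegral_congr fun y => ?_
            rw [← lintegral_const_mul _ (show Measurable fun x => w x * K x y from hwm.mul (hKm1 y))]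
            exact lintegral_congr fun x => by ring
        _ = ∫⁻ y in Ioi (0:ℝ), g y * (ENNReal.ofReal (y ^ a) * A) := by
            refine setLIntegral_congr_fun measurableSet_Ioi (fun y hy => ?_)
            have hsc := hscale y hy
            simp only [ENNReal.rpow_one] at hsc
            rw [hsc]
        _ = A * I := by
            rw [hI, ← lintegral_const_mul A
              (show Measurable fun y => ENNReal.ofReal (y ^ a) * g y from
                (by apply Measurable.ennreal_ofReal; fun_prop : Measurable
                  fun y : ℝ => ENNReal.ofReal (y ^ a)).mul hg)]
            exact lintegral_congr fun y => by ring
    · -- q > 1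
      set p' : ℝ := q.conjExponent with hp'
      have hpq : p'.HolderConjugate q := (Real.HolderConjugate.conjExponent hq1).symm
      have hp'pos : 0 < p' := hpq.pos
      have hp'inv : 1/p' = 1 - 1/q := by
        have h := hpq.inv_add_inv_eq_one
        rw [one_div, one_div]
        linarith
      have h1q : (0:ℝ) ≤ 1 - 1/q := by
        have : 1/q ≤ 1 := by rw [div_le_one hq0]; exact hq
        linarith
      set W : ℝ → ℝ≥0∞ := fun x => F x ^ (1 - 1/q) with hW
      have hWm : Measurable W := hFm.pow_const _
      have hholder : ∀ n, J n ≤ J n ^ (1 - 1/q) * (A ^ (1/q) * I) := by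
        intro n
        have key1 : ∀ x ∈ T n, F x = W x * (w x ^ (1/q) * Φ x) := by
          intro x _
          have e2 : q * (1 - 1/q) + 1 = q := by field_simp; ring
          have hWx : W x * (w x ^ (1/q) * Φ x)
              = (w x ^ (1 - 1/q) * w x ^ (1/q)) * ((Φ x ^ q) ^ (1 - 1/q) * Φ x ^ (1:ℝ)) := by
            have : W x = w x ^ (1 - 1/q) * (Φ x ^ q) ^ (1 - 1/q) :=
              ENNReal.mul_rpow_of_nonneg _ _ h1q
            rw [this, ENNReal.rpow_one]
            ring
          rw [hWx, ← ENNReal.rpow_add_of_nonneg _ _ h1q (by positivity),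
            ← ENNReal.rpow_mul,
            ← ENNReal.rpow_add_of_nonneg _ _ (mul_nonneg hq0.le h1q) zero_le_one,
            show (1 - 1/q) + 1/q = (1:ℝ) by ring, e2, ENNReal.rpow_one]
        have hswap : J n = ∫⁻ y in Ioi (0:ℝ),
            g y * ∫⁻ x in T n, W x * (w x ^ (1/q) * K x y) := by
          calc J n = ∫⁻ x in T n, W x * (w x ^ (1/q) * Φ x) :=
                setLIntegral_congr_fun (hTm n) key1
            _ = ∫⁻ x in T n, ∫⁻ y in Ioi (0:ℝ), (W x * w x ^ (1/q)) * (g y * K x y) := by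
                refine setLIntegral_congr_fun (hTm n) (fun x _ => ?_)
                rw [show W x * (w x ^ (1/q) * Φ x) = (W x * w x ^ (1/q)) * Φ x by ring]
                exact (lintegral_const_mul _ (hg.mul (hKm2 x))).symm
            _ = ∫⁻ y in Ioi (0:ℝ), ∫⁻ x in T n, (W x * w x ^ (1/q)) * (g y * K x y) := by
                apply lintegral_lintegral_swap
                exact (((hWm.comp measurable_fst).mul
                  ((hwm.pow_const _).comp measurable_fst)).mul
                  ((hg.comp measurable_snd).mul hKm)).aemeasurable
            _ = ∫⁻ y in Ioi (0:ℝ), g y * ∫⁻ x in T n, W x * (w x ^ (1/q) * K x y) := by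
                refine lintegral_congr fun y => ?_
                rw [← lintegral_const_mul _ (show Measurable fun x => W x * (w x ^ (1/q) * K x y) from
                  hWm.mul ((hwm.pow_const _).mul (hKm1 y)))]
                exact lintegral_congr fun x => by ring
        have hinner : ∀ y ∈ Ioi (0:ℝ), (∫⁻ x in T n, W x * (w x ^ (1/q) * K x y))
            ≤ J n ^ (1 - 1/q) * (A ^ (1/q) * ENNReal.ofReal (y ^ a)) := by
          intro y hy
          have hy0 : (0:ℝ) < y := hy
          have hhold := ENNReal.lintegral_mul_le_Lp_mul_Lq (volume.restrict (T n)) hpq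
            (f := W) (g := fun x => w x ^ (1/q) * K x y)
            hWm.aemeasurable (((hwm.pow_const (1/q)).mul (hKm1 y)).aemeasurable)
          simp only [Pi.mul_apply] at hhold
          refine le_trans hhold ?_
          have hf1 : (∫⁻ x in T n, W x ^ p') ^ (1/p') = J n ^ (1 - 1/q) := by
            have hWp : ∀ x, W x ^ p' = F x := by
              intro x
              show (F x ^ (1 - 1/q)) ^ p' = F x
              rw [← ENNReal.rpow_mul, ← hp'inv, one_div_mul_cancel hp'pos.ne',
                ENNReal.rpow_one]
            rw [lintegral_congr hWp, hp'inv]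
          have hf2 : (∫⁻ x in T n, (w x ^ (1/q) * K x y) ^ q) ^ (1/q)
              ≤ A ^ (1/q) * ENNReal.ofReal (y ^ a) := by
            have hptw : ∀ x, (w x ^ (1/q) * K x y) ^ q = w x * K x y ^ q := by
              intro x
              rw [ENNReal.mul_rpow_of_nonneg _ _ hq0.le, ← ENNReal.rpow_mul,
                one_div_mul_cancel hqne, ENNReal.rpow_one]
            calc (∫⁻ x in T n, (w x ^ (1/q) * K x y) ^ q) ^ (1/q)
                = (∫⁻ x in T n, w x * K x y ^ q) ^ (1/q) := by
                  rw [lintegral_congr hptw]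
              _ ≤ (∫⁻ x in Ioi (0:ℝ), w x * K x y ^ q) ^ (1/q) :=
                  ENNReal.rpow_le_rpow (lintegral_mono_set (hTsub n)) (by positivity)
              _ = (ENNReal.ofReal (y ^ a) ^ q * A) ^ (1/q) := by rw [hscale y hy0]
              _ = A ^ (1/q) * ENNReal.ofReal (y ^ a) := by
                  rw [ENNReal.mul_rpow_of_nonneg _ _ (by positivity), ← ENNReal.rpow_mul,
                    mul_one_div_cancel hqne, ENNReal.rpow_one]
                  exact mul_comm _ _
          rw [hf1]
          exact mul_le_mul_right hf2 _
        calc J n = ∫⁻ y in Ioi (0:ℝ), g y * ∫⁻ x in T n, W x * (w x ^ (1/q) * K x y) :=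
              hswap
          _ ≤ ∫⁻ y in Ioi (0:ℝ),
                g y * (J n ^ (1 - 1/q) * (A ^ (1/q) * ENNReal.ofReal (y ^ a))) := by
              refine setLIntegral_mono_ae
                ((hg.mul (measurable_const.mul (measurable_const.mul
                  (show Measurable fun y : ℝ => ENNReal.ofReal (y ^ a) from
                    by apply Measurable.ennreal_ofReal; fun_prop)))).aemeasurable)
                (ae_of_all _ fun y hy => mul_le_mul_right (hinner y hy) _)
          _ = J n ^ (1 - 1/q) * (A ^ (1/q) * I) := by
              calc ∫⁻ y in Ioi (0:ℝ),
                    g y * (J n ^ (1 - 1/q) * (A ^ (1/q) * ENNReal.ofReal (y ^ a)))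
                  = ∫⁻ y in Ioi (0:ℝ), (J n ^ (1 - 1/q) * A ^ (1/q))
                      * (ENNReal.ofReal (y ^ a) * g y) :=
                    lintegral_congr fun y => by ring
                _ = (J n ^ (1 - 1/q) * A ^ (1/q)) * I := by
                    rw [hI, lintegral_const_mul _
                      (show Measurable fun y : ℝ => ENNReal.ofReal (y ^ a) * g y from
                      (show Measurable fun y : ℝ => ENNReal.ofReal (y ^ a) from
                        by apply Measurable.ennreal_ofReal; fun_prop).mul hg)]
                _ = J n ^ (1 - 1/q) * (A ^ (1/q) * I) := by ring
      rw [hmc]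
      refine iSup_le fun n => ?_
      rcases eq_or_ne (J n) 0 with h0 | h0
      · exact h0 ▸ zero_le
      have hfin := hJfin n
      have hne1 : J n ^ (1 - 1/q) ≠ 0 := by
        simp [ENNReal.rpow_eq_zero_iff, h0, hfin]
      have hne2 : J n ^ (1 - 1/q) ≠ ⊤ := by
        simp [ENNReal.rpow_eq_top_iff, h0, hfin]
      have h4 : J n ^ (1/q) = J n / J n ^ (1 - 1/q) := by
        have hsub := ENNReal.rpow_sub (x := J n) 1 (1 - 1/q) h0 hfin
        rw [ENNReal.rpow_one] at hsub
        rw [← hsub]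
        congr 1
        ring
      have h3 : J n ^ (1/q) ≤ A ^ (1/q) * I := by
        rw [h4, ENNReal.div_le_iff_le_mul (Or.inl hne1) (Or.inl hne2)]
        calc J n ≤ J n ^ (1 - 1/q) * (A ^ (1/q) * I) := hholder n
          _ = A ^ (1/q) * I * J n ^ (1 - 1/q) := by ring
      calc J n = (J n ^ (1/q)) ^ q := by
            rw [← ENNReal.rpow_mul, one_div_mul_cancel hqne, ENNReal.rpow_one]
        _ ≤ (A ^ (1/q) * I) ^ q := ENNReal.rpow_le_rpow h3 hq0.le
  calc (∫⁻ x in Ioi (0:ℝ), w x * (‖Hop α β γ f x‖₊ : ℝ≥0∞) ^ q) ^ (1/q)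
      ≤ (∫⁻ x in Ioi (0:ℝ), F x) ^ (1/q) := by
        apply ENNReal.rpow_le_rpow _ (by positivity)
        refine setLIntegral_mono_ae hFm.aemeasurable (ae_of_all _ fun x hx => ?_)
        exact mul_le_mul_right (ENNReal.rpow_le_rpow (hHle x hx) hq0.le) _
    _ ≤ ((A ^ (1/q) * I) ^ q) ^ (1/q) := ENNReal.rpow_le_rpow hmain (by positivity)
    _ = A ^ (1/q) * I := by
        rw [← ENNReal.rpow_mul, mul_one_div_cancel hqne, ENNReal.rpow_one]
    _ ≤ (A ^ (1/q) + 1) * I := mul_le_mul_left le_self_add _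
end

section
/- Let a > -1 and 1 < p < ∞. The operator H_{α,β,γ} is bounded from L^p((0,∞), y^a dy) to L^∞((0,∞)) if and only if γ = α + β + 1 - (a+1)/p, α > 0, and a+1 < p(β+1). -/
open MeasureTheory Set ENNReal intervalIntegral

lemma aux_rpow_bound {d K : ℝ} (h : ∀ l : ℝ, 0 < l → l ^ d ≤ K) : d = 0 := by
  by_contra hd
  have h1 : (1:ℝ) ≤ K := by simpa using h 1 one_pos
  have hK1 : (0:ℝ) < K + 1 := by linarith
  have h2 := h ((K+1) ^ (1/d)) (Real.rpow_pos_of_pos hK1 _)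
  rw [← Real.rpow_mul hK1.le, one_div_mul_cancel hd, Real.rpow_one] at h2
  linarith

lemma rpow_min_le {A B y c : ℝ} (hA : 0 < A) (h1 : A ≤ y) (h2 : y ≤ B) :
    min (A ^ c) (B ^ c) ≤ y ^ c := by
  rcases le_or_gt 0 c with hc | hc
  · exact le_trans (min_le_left _ _) (Real.rpow_le_rpow hA.le h1 hc)
  · exact le_trans (min_le_right _ _) (Real.rpow_le_rpow_of_nonpos (hA.trans_le h1) h2 hc.le)

lemma rpow_le_max {A B y c : ℝ} (hA : 0 < A) (h1 : A ≤ y) (h2 : y ≤ B) :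
    y ^ c ≤ max (A ^ c) (B ^ c) := by
  rcases le_or_gt 0 c with hc | hc
  · exact le_trans (Real.rpow_le_rpow (hA.le.trans h1) h2 hc) (le_max_right _ _)
  · exact le_trans (Real.rpow_le_rpow_of_nonpos hA h1 hc.le) (le_max_left _ _)

lemma scale_rpow_ge {l u v c z : ℝ} (hl : 0 < l) (hu : 0 < u)
    (hz1 : l * u ≤ z) (hz2 : z ≤ l * v) :
    l ^ c * min (u ^ c) (v ^ c) ≤ z ^ c := by
  have hz0 : 0 < z := lt_of_lt_of_le (by positivity) hz1
  have hzl : z = l * (z / l) := by field_simp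
  rw [hzl, Real.mul_rpow hl.le (by positivity)]
  refine mul_le_mul_of_nonneg_left ?_ (Real.rpow_nonneg hl.le c)
  exact rpow_min_le hu ((le_div_iff₀ hl).mpr (by linarith)) ((div_le_iff₀ hl).mpr (by linarith))

lemma scale_rpow_le {l u v c z : ℝ} (hl : 0 < l) (hu : 0 < u)
    (hz1 : l * u ≤ z) (hz2 : z ≤ l * v) :
    z ^ c ≤ l ^ c * max (u ^ c) (v ^ c) := by
  have hz0 : 0 < z := lt_of_lt_of_le (by positivity) hz1
  have hzl : z = l * (z / l) := by field_simp
  rw [hzl, Real.mul_rpow hl.le (by positivity)]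
  refine mul_le_mul_of_nonneg_left ?_ (Real.rpow_nonneg hl.le c)
  exact rpow_le_max hu ((le_div_iff₀ hl).mpr (by linarith)) ((div_le_iff₀ hl).mpr (by linarith))

lemma integrableOn_kernel_Ioc {x s r A B : ℝ} (hx : 0 < x) (hA : 0 < A) :
    IntegrableOn (fun y => y ^ s * (x + y) ^ r) (Ioc A B) := by
  refine (ContinuousOn.integrableOn_Icc ?_).mono_set Ioc_subset_Icc_self
  intro y hy
  have hy0 : 0 < y := lt_of_lt_of_le hA hy.1
  apply ContinuousAt.continuousWithinAt
  exact (Real.continuousAt_rpow_const y s (Or.inl hy0.ne')).mul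
    ((continuousAt_const.add continuousAt_id).rpow_const (Or.inl (by show x + y ≠ 0; positivity)))

lemma integrableOn_kernel_Ioi {x s r : ℝ} (hx : 0 < x) (hs : -1 < s) (hsr : s + 1 < r) :
    IntegrableOn (fun y => y ^ s * (x + y) ^ (-r)) (Ioi 0) := by
  have hmeas : Measurable fun y : ℝ => y ^ s * (x + y) ^ (-r) := by fun_prop
  have h1 : IntegrableOn (fun y => y ^ s * (x + y) ^ (-r)) (Ioc 0 1) := by
    rw [integrableOn_Ioc_iff_integrableOn_Ioo]
    set c1 : ℝ := max (x ^ (-r)) ((x + 1) ^ (-r)) with hc1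
    have hbound : IntegrableOn (fun y : ℝ => c1 * y ^ s) (Ioo 0 1) :=
      ((intervalIntegral.integrableOn_Ioo_rpow_iff one_pos).mpr hs).const_mul c1
    refine Integrable.mono' hbound hmeas.aestronglyMeasurable.restrict ?_
    filter_upwards [ae_restrict_mem measurableSet_Ioo] with y hy
    have hy0 : 0 < y := hy.1
    rw [Real.norm_eq_abs, abs_of_nonneg (by positivity), mul_comm c1 _]
    refine mul_le_mul_of_nonneg_left ?_ (Real.rpow_nonneg hy0.le s)
    exact rpow_le_max hx (by linarith) (by linarith [hy.2.le])
  have h2 : IntegrableOn (fun y => y ^ s * (x + y) ^ (-r)) (Ioi 1) := by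
    set c2 : ℝ := max ((1:ℝ) ^ (-r)) ((x + 1) ^ (-r)) with hc2
    have hbound : IntegrableOn (fun y : ℝ => c2 * y ^ (s - r)) (Ioi 1) :=
      (integrableOn_Ioi_rpow_of_lt (by linarith) one_pos).const_mul c2
    refine Integrable.mono' hbound hmeas.aestronglyMeasurable.restrict ?_
    filter_upwards [ae_restrict_mem measurableSet_Ioi] with y hy
    have hy1 : (1:ℝ) < y := hy
    have hy0 : 0 < y := lt_trans one_pos hy1
    rw [Real.norm_eq_abs, abs_of_nonneg (by positivity), mul_comm c2 _,
      Real.rpow_sub hy0, div_eq_mul_inv, ← Real.rpow_neg hy0.le, mul_assoc]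
    refine mul_le_mul_of_nonneg_left ?_ (Real.rpow_nonneg hy0.le s)
    calc (x + y) ^ (-r) ≤ y ^ (-r) * max ((1:ℝ) ^ (-r)) ((x + 1) ^ (-r)) :=
          scale_rpow_le hy0 one_pos (by linarith) (by nlinarith)
      _ = y ^ (-r) * c2 := rfl
  have := h1.union h2
  rwa [Ioc_union_Ioi_eq_Ioi one_pos.le] at this




lemma norm_power_indicator {a p t A B : ℝ} (hp : 0 < p) (ht : t * p + a = -1)
    (hA : 0 < A) (hAB : A < B) :
    eLpNorm ((Ioc A B).indicator fun y => y ^ t) (ENNReal.ofReal p) (wMeasure a)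
      = ENNReal.ofReal (Real.log (B / A)) ^ (1 / p) := by
  have hp0 : ENNReal.ofReal p ≠ 0 := by
    simp only [ne_eq, ENNReal.ofReal_eq_zero, not_le]; exact hp
  have hsub : Ioc A B ⊆ Ioi (0:ℝ) := fun y hy => hA.trans hy.1
  rw [eLpNorm_eq_lintegral_rpow_enorm_toReal hp0 ofReal_ne_top, ENNReal.toReal_ofReal hp.le]
  congr 1
  have hm0 : Measurable ((Ioc A B).indicator fun y : ℝ => y ^ t) :=
    (by fun_prop : Measurable fun y : ℝ => y ^ t).indicator measurableSet_Ioc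
  rw [wMeasure, lintegral_withDensity_eq_lintegral_mul _ (by fun_prop)
    (hm0.enorm.pow_const p)]
  have hcong : ∀ y ∈ Ioi (0:ℝ),
      ((fun y => ENNReal.ofReal (y ^ a)) * fun y => ‖(Ioc A B).indicator (fun y => y ^ t) y‖ₑ ^ p) y
        = (Ioc A B).indicator (fun y => ENNReal.ofReal y⁻¹) y := by
    intro y hy
    have hy0 : (0:ℝ) < y := hy
    simp only [Pi.mul_apply]
    by_cases hmem : y ∈ Ioc A B
    · rw [Set.indicator_of_mem hmem, Set.indicator_of_mem hmem,
        Real.enorm_eq_ofReal (Real.rpow_nonneg hy0.le t),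
        ENNReal.ofReal_rpow_of_pos (Real.rpow_pos_of_pos hy0 t),
        ← Real.rpow_mul hy0.le, ← ENNReal.ofReal_mul (Real.rpow_nonneg hy0.le a),
        ← Real.rpow_add hy0, add_comm, ht, Real.rpow_neg_one]
    · rw [Set.indicator_of_notMem hmem, Set.indicator_of_notMem hmem]
      simp [ENNReal.zero_rpow_of_pos hp]
  rw [setLIntegral_congr_fun measurableSet_Ioi hcong,
    lintegral_indicator measurableSet_Ioc _, Measure.restrict_restrict measurableSet_Ioc,
    Set.inter_eq_left.mpr hsub]
  have hint : IntegrableOn (fun y : ℝ => y⁻¹) (Ioc A B) := by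
    refine (ContinuousOn.integrableOn_Icc ?_).mono_set Ioc_subset_Icc_self
    exact ContinuousOn.inv₀ continuousOn_id (fun y hy => (hA.trans_le hy.1).ne')
  rw [← ofReal_integral_eq_lintegral_ofReal hint
    ((ae_restrict_iff' measurableSet_Ioc).mpr (ae_of_all _ fun y hy => (inv_pos.mpr (hA.trans hy.1)).le)),
    ← intervalIntegral.integral_of_le hAB.le,
    integral_inv (by rw [Set.uIcc_of_le hAB.le]; exact fun h => (hA.trans_le h.1).ne' rfl)]

lemma hop_indicator {α β γ t A B : ℝ} (hA : 0 < A) {x : ℝ} (hx : 0 < x) :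
    Hop α β γ ((Ioc A B).indicator fun y => y ^ t) x
      = x ^ α * ∫ y in Ioc A B, y ^ (t + β) * (x + y) ^ (-γ) := by
  have hsub : Ioc A B ⊆ Ioi (0:ℝ) := fun y hy => hA.trans hy.1
  unfold Hop
  congr 1
  have h1 : ∀ y, (Ioc A B).indicator (fun y => y ^ t) y * y ^ β / (x + y) ^ γ
      = (Ioc A B).indicator (fun y => y ^ t * y ^ β / (x + y) ^ γ) y := by
    intro y
    by_cases hmem : y ∈ Ioc A B
    · rw [Set.indicator_of_mem hmem, Set.indicator_of_mem hmem]
    · rw [Set.indicator_of_notMem hmem, Set.indicator_of_notMem hmem, zero_mul, zero_div]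
  simp_rw [h1]
  rw [MeasureTheory.integral_indicator measurableSet_Ioc, Measure.restrict_restrict measurableSet_Ioc,
    Set.inter_eq_left.mpr hsub]
  refine setIntegral_congr_fun measurableSet_Ioc fun y hy => ?_
  have hy0 : 0 < y := hA.trans hy.1
  rw [Real.rpow_add hy0, Real.rpow_neg (by positivity), div_eq_mul_inv]

lemma le_eLpNormTop_of_Ioc {g : ℝ → ℝ} {m u v : ℝ} (hu : 0 < u) (huv : u < v)
    (hm : ∀ x ∈ Ioc u v, m ≤ g x) :
    ENNReal.ofReal m ≤ eLpNorm g ⊤ (volume.restrict (Ioi (0:ℝ))) := by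
  by_contra hlt
  push_neg at hlt
  rw [show (⊤ : ℝ≥0∞) = ∞ from rfl, eLpNorm_exponent_top] at hlt
  unfold eLpNormEssSup at hlt
  have h1 := ae_lt_of_essSup_lt hlt
  have h2 : ∀ᵐ x ∂(volume.restrict (Ioc u v)), (‖g x‖₊ : ℝ≥0∞) < ENNReal.ofReal m :=
    h1.filter_mono (ae_mono (Measure.restrict_mono (fun y hy => hu.trans hy.1) le_rfl))
  have hne : volume.restrict (Ioc u v) ≠ 0 := by
    intro h0
    have : volume (Ioc u v) = 0 := by
      rw [← Measure.restrict_apply_univ, h0]; rfl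
    rw [Real.volume_Ioc] at this
    exact (ENNReal.ofReal_pos.mpr (by linarith)).ne' this
  have : ∀ᵐ x ∂(volume.restrict (Ioc u v)),
      (‖g x‖₊ : ℝ≥0∞) < ENNReal.ofReal m ∧ x ∈ Ioc u v :=
    h2.and (ae_restrict_mem measurableSet_Ioc)
  obtain ⟨x, hx1, hx2⟩ := (@Filter.Eventually.exists _ _ _ (ae_neBot.mpr hne) this)
  have : ENNReal.ofReal m ≤ (‖g x‖₊ : ℝ≥0∞) := by
    rw [← enorm_eq_nnnorm, Real.enorm_eq_ofReal_abs]
    exact ENNReal.ofReal_le_ofReal ((hm x hx2).trans (le_abs_self _))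
  exact absurd hx1 this.not_gt

lemma integrableOn_inv_Ioc {A B : ℝ} (hA : 0 < A) :
    IntegrableOn (fun y : ℝ => y⁻¹) (Ioc A B) := by
  refine (ContinuousOn.integrableOn_Icc ?_).mono_set Ioc_subset_Icc_self
  exact ContinuousOn.inv₀ continuousOn_id (fun y hy => (hA.trans_le hy.1).ne')

lemma integral_inv_Ioc {A B : ℝ} (hA : 0 < A) (hAB : A < B) :
    ∫ y in Ioc A B, y⁻¹ = Real.log (B / A) := by
  rw [← intervalIntegral.integral_of_le hAB.le,
    integral_inv (by rw [Set.uIcc_of_le hAB.le]; exact fun h => (hA.trans_le h.1).ne' rfl)]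

lemma key_ineq {a p α β γ t : ℝ} (hp : 1 < p) (ht : t * p + a = -1) {C : ℝ≥0∞} (hC : C ≠ ⊤)
    (hb : ∀ f : ℝ → ℝ, Measurable f →
        eLpNorm (Hop α β γ f) ⊤ (volume.restrict (Ioi (0:ℝ)))
          ≤ C * eLpNorm f (ENNReal.ofReal p) (wMeasure a))
    {A B u v m : ℝ} (hA : 0 < A) (hAB : A < B) (hu : 0 < u) (huv : u < v)
    (hm : ∀ x ∈ Ioc u v, m ≤ x ^ α * ∫ y in Ioc A B, y ^ (t + β) * (x + y) ^ (-γ)) :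
    m ≤ C.toReal * (Real.log (B / A)) ^ (1 / p) := by
  have hmeas : Measurable ((Ioc A B).indicator fun y : ℝ => y ^ t) :=
    (by fun_prop : Measurable fun y : ℝ => y ^ t).indicator measurableSet_Ioc
  have h1 := hb _ hmeas
  rw [norm_power_indicator (by linarith) ht hA hAB] at h1
  have h2 : ENNReal.ofReal m ≤ eLpNorm (Hop α β γ ((Ioc A B).indicator fun y => y ^ t)) ⊤
      (volume.restrict (Ioi (0:ℝ))) :=
    le_eLpNormTop_of_Ioc hu huv (fun x hx => by
      rw [hop_indicator hA (hu.trans hx.1)]; exact hm x hx)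
  have h3 := h2.trans h1
  have hlog : 0 < Real.log (B / A) := Real.log_pos ((one_lt_div hA).mpr hAB)
  rw [← ENNReal.ofReal_toReal hC, ENNReal.ofReal_rpow_of_pos hlog,
    ← ENNReal.ofReal_mul ENNReal.toReal_nonneg] at h3
  exact (ENNReal.ofReal_le_ofReal_iff (by positivity)).mp h3

lemma log_contradiction {c K p : ℝ} (hc : 0 < c) (hp : 1 < p)
    (h : ∀ L : ℝ, 0 < L → c * L ≤ K * L ^ (1/p)) : False := by
  have hp0 : 0 < p := by linarith
  have hd : (1 : ℝ) - 1/p = 0 := by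
    apply aux_rpow_bound (K := K / c)
    intro L hL
    rw [Real.rpow_sub hL, Real.rpow_one, div_le_div_iff₀ (Real.rpow_pos_of_pos hL _) hc]
    calc L * c = c * L := mul_comm _ _
      _ ≤ K * L ^ (1/p) := h L hL
  have : 1/p < 1 := by rw [div_lt_one hp0]; exact hp
  linarith

lemma nec_beta {a p α β γ : ℝ} (ha : -1 < a) (hp : 1 < p) {C : ℝ≥0∞} (hC : C ≠ ⊤)
    (hb : ∀ f : ℝ → ℝ, Measurable f →
        eLpNorm (Hop α β γ f) ⊤ (volume.restrict (Ioi (0:ℝ)))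
          ≤ C * eLpNorm f (ENNReal.ofReal p) (wMeasure a)) :
    a + 1 < p * (β + 1) := by
  have hp0 : 0 < p := by linarith
  set t : ℝ := -(a+1)/p with htdef
  have ht : t * p + a = -1 := by rw [htdef, div_mul_cancel₀ _ hp0.ne']; ring
  by_contra hcon
  push_neg at hcon
  have hσ : t + β ≤ -1 := by
    have h1 : β + 1 ≤ (a+1)/p := by
      rw [le_div_iff₀ hp0]; nlinarith
    have h2 : t = -((a+1)/p) := by rw [htdef]; ring
    linarith
  set m1 : ℝ := min ((1:ℝ) ^ α) (2 ^ α) with hm1def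
  set m3 : ℝ := min ((1:ℝ) ^ (-γ)) (3 ^ (-γ)) with hm3def
  have hm1 : 0 < m1 := lt_min (Real.rpow_pos_of_pos one_pos _) (Real.rpow_pos_of_pos two_pos _)
  have hm3 : 0 < m3 := lt_min (Real.rpow_pos_of_pos one_pos _)
    (Real.rpow_pos_of_pos three_pos _)
  refine log_contradiction (K := C.toReal) (mul_pos hm1 hm3) hp fun L hL => ?_
  set A : ℝ := Real.exp (-L) with hAdef
  have hA : 0 < A := Real.exp_pos _
  have hA1 : A < 1 := by rw [hAdef, ← Real.exp_zero]; exact Real.exp_lt_exp.mpr (by linarith)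
  have hlog : Real.log ((1:ℝ) / A) = L := by
    rw [hAdef, one_div, ← Real.exp_neg, Real.log_exp, neg_neg]
  have hwindow : ∀ x ∈ Ioc (1:ℝ) 2,
      m1 * m3 * L ≤ x ^ α * ∫ y in Ioc A 1, y ^ (t + β) * (x + y) ^ (-γ) := by
    intro x hx
    have hx1 : 1 < x := hx.1
    have hx2 : x ≤ 2 := hx.2
    have hx0 : 0 < x := by linarith
    have hint : IntegrableOn (fun y => y ^ (t+β) * (x+y) ^ (-γ)) (Ioc A 1) :=
      integrableOn_kernel_Ioc hx0 hA
    have hint2 : IntegrableOn (fun y : ℝ => m3 * y⁻¹) (Ioc A 1) :=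
      (integrableOn_inv_Ioc hA).const_mul m3
    have hmono : ∀ y ∈ Ioc A 1, m3 * y⁻¹ ≤ y ^ (t+β) * (x+y) ^ (-γ) := by
      intro y hy
      have hy0 : 0 < y := hA.trans hy.1
      have h1 : y⁻¹ ≤ y ^ (t+β) := by
        rw [← Real.rpow_neg_one y]
        exact Real.rpow_le_rpow_of_exponent_ge hy0 hy.2 hσ
      have h2 : m3 ≤ (x+y) ^ (-γ) := rpow_min_le one_pos (by linarith) (by linarith [hy.2])
      calc m3 * y⁻¹ = y⁻¹ * m3 := mul_comm _ _
        _ ≤ y ^ (t+β) * (x+y) ^ (-γ) := mul_le_mul h1 h2 hm3.le (Real.rpow_nonneg hy0.le _)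
    have hIest : m3 * L ≤ ∫ y in Ioc A 1, y ^ (t+β) * (x+y) ^ (-γ) := by
      have h5 := setIntegral_mono_on hint2 hint measurableSet_Ioc hmono
      rwa [MeasureTheory.integral_const_mul, integral_inv_Ioc hA hA1, hlog] at h5
    have hxα : m1 ≤ x ^ α := rpow_min_le one_pos hx1.le hx2
    calc m1 * m3 * L = m1 * (m3 * L) := by ring
      _ ≤ x ^ α * ∫ y in Ioc A 1, y ^ (t+β) * (x+y) ^ (-γ) :=
          mul_le_mul hxα hIest (mul_pos hm3 hL).le (Real.rpow_nonneg hx0.le _)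
  have key := key_ineq hp ht hC hb hA hA1 one_pos one_lt_two hwindow
  rwa [hlog] at key

lemma nec_gamma {a p α β γ : ℝ} (ha : -1 < a) (hp : 1 < p) {C : ℝ≥0∞} (hC : C ≠ ⊤)
    (hb : ∀ f : ℝ → ℝ, Measurable f →
        eLpNorm (Hop α β γ f) ⊤ (volume.restrict (Ioi (0:ℝ)))
          ≤ C * eLpNorm f (ENNReal.ofReal p) (wMeasure a)) :
    γ = α + β + 1 - (a + 1) / p := by
  have hp0 : 0 < p := by linarith
  set t : ℝ := -(a+1)/p with htdef
  have ht : t * p + a = -1 := by rw [htdef, div_mul_cancel₀ _ hp0.ne']; ring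
  set m1 : ℝ := min ((1:ℝ) ^ α) (2 ^ α) with hm1def
  set m2 : ℝ := min ((1:ℝ) ^ (t+β)) (2 ^ (t+β)) with hm2def
  set m3 : ℝ := min ((2:ℝ) ^ (-γ)) (4 ^ (-γ)) with hm3def
  have hm1 : 0 < m1 := lt_min (Real.rpow_pos_of_pos one_pos _) (Real.rpow_pos_of_pos two_pos _)
  have hm2 : 0 < m2 := lt_min (Real.rpow_pos_of_pos one_pos _) (Real.rpow_pos_of_pos two_pos _)
  have hm3 : 0 < m3 := lt_min (Real.rpow_pos_of_pos two_pos _)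
    (Real.rpow_pos_of_pos four_pos _)
  set E : ℝ := α + (t + β) + -γ + 1 with hEdef
  have hE0 : E = 0 := by
    have hmain : ∀ l : ℝ, 0 < l →
        m1 * m2 * m3 * l ^ E ≤ C.toReal * (Real.log ((2*l) / l)) ^ (1/p) := by
      intro l hl
      have h2l : l < 2 * l := by linarith
      refine key_ineq hp ht hC hb hl h2l hl h2l ?_
      intro x hx
      have hx0 : 0 < x := hl.trans hx.1
      have hmeasIoc : (volume (Ioc l (2*l))).toReal = l := by
        rw [Real.volume_Ioc, ENNReal.toReal_ofReal (by linarith)]; ring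
      have hint : IntegrableOn (fun y => y ^ (t+β) * (x+y) ^ (-γ)) (Ioc l (2*l)) :=
        integrableOn_kernel_Ioc hx0 hl
      have hconst : ∀ y ∈ Ioc l (2*l),
          l ^ (t+β) * m2 * (l ^ (-γ) * m3) ≤ y ^ (t+β) * (x+y) ^ (-γ) := by
        intro y hy
        have h1 : l ^ (t+β) * m2 ≤ y ^ (t+β) := by
          refine scale_rpow_ge hl one_pos (by linarith [hy.1]) (by linarith [hy.2])
        have h2 : l ^ (-γ) * m3 ≤ (x+y) ^ (-γ) := by
          refine scale_rpow_ge hl two_pos (by linarith [hx.1, hy.1]) (by linarith [hx.2, hy.2])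
        exact mul_le_mul h1 h2 (by positivity) (Real.rpow_nonneg (by linarith [hy.1]) _)
      have hIest := setIntegral_ge_of_const_le_real measurableSet_Ioc
        (by rw [Real.volume_Ioc]; exact ENNReal.ofReal_ne_top) hconst hint
      rw [show volume.real (Ioc l (2*l)) = l from hmeasIoc] at hIest
      have hxα : l ^ α * m1 ≤ x ^ α :=
        scale_rpow_ge hl one_pos (by linarith [hx.1]) (by linarith [hx.2])
      have hpow : l ^ E = l ^ α * l ^ (t+β) * l ^ (-γ) * l := by
        rw [hEdef, Real.rpow_add hl, Real.rpow_add hl, Real.rpow_add hl, Real.rpow_one]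
      calc m1 * m2 * m3 * l ^ E
          = (l ^ α * m1) * (l ^ (t+β) * m2 * (l ^ (-γ) * m3) * l) := by rw [hpow]; ring
        _ ≤ x ^ α * ∫ y in Ioc l (2*l), y ^ (t+β) * (x+y) ^ (-γ) := by
            refine mul_le_mul hxα hIest ?_ (Real.rpow_nonneg hx0.le _)
            positivity
    have hlog2 : ∀ l : ℝ, 0 < l → Real.log ((2*l) / l) = Real.log 2 := by
      intro l hl; rw [mul_div_assoc, div_self hl.ne', mul_one]
    have hEbound : ∀ l : ℝ, 0 < l →
        l ^ E ≤ C.toReal * (Real.log 2) ^ (1/p) / (m1 * m2 * m3) := by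
      intro l hl
      have := hmain l hl
      rw [hlog2 l hl] at this
      rw [le_div_iff₀ (by positivity)]
      linarith [this]
    exact aux_rpow_bound fun l hl => hEbound l hl
  have : t = -((a+1)/p) := by rw [htdef]; ring
  linarith [hE0, this]

lemma nec_alpha {a p α β γ : ℝ} (ha : -1 < a) (hp : 1 < p) {C : ℝ≥0∞} (hC : C ≠ ⊤)
    (hγ : γ = α + β + 1 - (a + 1) / p)
    (hb : ∀ f : ℝ → ℝ, Measurable f →
        eLpNorm (Hop α β γ f) ⊤ (volume.restrict (Ioi (0:ℝ)))
          ≤ C * eLpNorm f (ENNReal.ofReal p) (wMeasure a)) :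
    0 < α := by
  have hp0 : 0 < p := by linarith
  set t : ℝ := -(a+1)/p with htdef
  have ht : t * p + a = -1 := by rw [htdef, div_mul_cancel₀ _ hp0.ne']; ring
  by_contra hcon
  push_neg at hcon
  have hσ : -1 ≤ t + β - γ := by
    have h2 : t = -((a+1)/p) := by rw [htdef]; ring
    rw [hγ]; linarith
  set m1 : ℝ := min ((1:ℝ) ^ α) (2 ^ α) with hm1def
  set m3 : ℝ := min ((1:ℝ) ^ (-γ)) (3 ^ (-γ)) with hm3def
  have hm1 : 0 < m1 := lt_min (Real.rpow_pos_of_pos one_pos _) (Real.rpow_pos_of_pos two_pos _)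
  have hm3 : 0 < m3 := lt_min (Real.rpow_pos_of_pos one_pos _)
    (Real.rpow_pos_of_pos three_pos _)
  refine log_contradiction (K := C.toReal) (mul_pos hm1 hm3) hp fun L hL => ?_
  set B : ℝ := Real.exp L with hBdef
  have hB1 : 1 < B := by rw [hBdef, ← Real.exp_zero]; exact Real.exp_lt_exp.mpr hL
  have hlog : Real.log (B / 1) = L := by rw [div_one, hBdef, Real.log_exp]
  have hwindow : ∀ x ∈ Ioc (1:ℝ) 2,
      m1 * m3 * L ≤ x ^ α * ∫ y in Ioc 1 B, y ^ (t + β) * (x + y) ^ (-γ) := by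
    intro x hx
    have hx1 : 1 < x := hx.1
    have hx2 : x ≤ 2 := hx.2
    have hx0 : 0 < x := by linarith
    have hint : IntegrableOn (fun y => y ^ (t+β) * (x+y) ^ (-γ)) (Ioc 1 B) :=
      integrableOn_kernel_Ioc hx0 one_pos
    have hint2 : IntegrableOn (fun y : ℝ => m3 * y⁻¹) (Ioc 1 B) :=
      (integrableOn_inv_Ioc one_pos).const_mul m3
    have hmono : ∀ y ∈ Ioc (1:ℝ) B, m3 * y⁻¹ ≤ y ^ (t+β) * (x+y) ^ (-γ) := by
      intro y hy
      have hy1 : 1 < y := hy.1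
      have hy0 : 0 < y := by linarith
      have h2 : y ^ (-γ) * m3 ≤ (x+y) ^ (-γ) :=
        scale_rpow_ge hy0 one_pos (by linarith) (by linarith)
      have h3 : y⁻¹ * m3 ≤ y ^ (t+β) * (x+y) ^ (-γ) := by
        calc y⁻¹ * m3 ≤ y ^ (t+β-γ) * m3 := by
              rw [← Real.rpow_neg_one y]
              exact mul_le_mul_of_nonneg_right
                (Real.rpow_le_rpow_of_exponent_le hy1.le hσ) hm3.le
          _ = y ^ (t+β) * (y ^ (-γ) * m3) := by
              rw [show t+β-γ = (t+β) + (-γ) by ring, Real.rpow_add hy0, mul_assoc]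
          _ ≤ y ^ (t+β) * (x+y) ^ (-γ) :=
              mul_le_mul_of_nonneg_left h2 (Real.rpow_nonneg hy0.le _)
      calc m3 * y⁻¹ = y⁻¹ * m3 := mul_comm _ _
        _ ≤ _ := h3
    have hIest : m3 * L ≤ ∫ y in Ioc 1 B, y ^ (t+β) * (x+y) ^ (-γ) := by
      have h5 := setIntegral_mono_on hint2 hint measurableSet_Ioc hmono
      rwa [MeasureTheory.integral_const_mul, integral_inv_Ioc one_pos hB1, hlog] at h5
    have hxα : m1 ≤ x ^ α := rpow_min_le one_pos hx1.le hx2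
    calc m1 * m3 * L = m1 * (m3 * L) := by ring
      _ ≤ x ^ α * ∫ y in Ioc 1 B, y ^ (t+β) * (x+y) ^ (-γ) :=
          mul_le_mul hxα hIest (mul_pos hm3 hL).le (Real.rpow_nonneg hx0.le _)
  have key := key_ineq hp ht hC hb one_pos hB1 one_pos one_lt_two hwindow
  rwa [hlog] at key

lemma sufficiency {a p α β γ : ℝ} (ha : -1 < a) (hp : 1 < p)
    (hγ : γ = α + β + 1 - (a + 1) / p) (hα : 0 < α) (hβ : a + 1 < p * (β + 1)) :
    ∃ C : ℝ≥0∞, C ≠ ⊤ ∧ ∀ f : ℝ → ℝ, Measurable f →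
        eLpNorm (Hop α β γ f) ⊤ (volume.restrict (Ioi (0:ℝ)))
          ≤ C * eLpNorm f (ENNReal.ofReal p) (wMeasure a) := by
  have hp0 : 0 < p := by linarith
  have hp1 : 0 < p - 1 := by linarith
  set q : ℝ := p / (p - 1) with hqdef
  have hq0 : 0 < q := by positivity
  have hpq : p.HolderConjugate q := (Real.holderConjugate_iff_eq_conjExponent hp).mpr hqdef
  set s : ℝ := (β - a / p) * q with hsdef
  set r : ℝ := γ * q with hrdef
  have hs : -1 < s := by
    rw [hsdef, hqdef]
    rw [show (β - a / p) * (p / (p - 1)) = (p * β - a) / (p - 1) by field_simp]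
    rw [lt_div_iff₀ hp1]
    nlinarith
  have hrs : r - s = q * α + 1 := by
    rw [hrdef, hsdef, hγ, hqdef]
    field_simp
    ring
  have hsr : s + 1 < r := by nlinarith [mul_pos hq0 hα]
  set K₁ : ℝ := ∫ y in Ioi (0:ℝ), y ^ s * (1 + y) ^ (-r) with hK₁def
  have hK₁0 : 0 ≤ K₁ := setIntegral_nonneg measurableSet_Ioi fun y hy => by
    have : (0:ℝ) < y := hy
    positivity
  set D : ℝ := K₁ ^ (1 / q) with hDdef
  have hD0 : 0 ≤ D := Real.rpow_nonneg hK₁0 _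
  have hKx : ∀ x : ℝ, 0 < x →
      ∫ y in Ioi (0:ℝ), y ^ s * (x + y) ^ (-r) = x ^ (s + 1 - r) * K₁ := by
    intro x hx
    have h1 := integral_comp_mul_left_Ioi (fun y => y ^ s * (x + y) ^ (-r)) 0 hx
    rw [mul_zero] at h1
    have h2 : ∀ u ∈ Ioi (0:ℝ),
        (x * u) ^ s * (x + x * u) ^ (-r) = x ^ (s - r) * (u ^ s * (1 + u) ^ (-r)) := by
      intro u hu
      have hu0 : (0:ℝ) < u := hu
      rw [Real.mul_rpow hx.le hu0.le, show x + x * u = x * (1 + u) by ring,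
        Real.mul_rpow hx.le (by positivity), show s - r = s + (-r) by ring,
        Real.rpow_add hx]
      ring
    rw [setIntegral_congr_fun measurableSet_Ioi h2, MeasureTheory.integral_const_mul,
      smul_eq_mul] at h1
    beta_reduce at h1
    have hI : ∫ y in Ioi (0:ℝ), y ^ s * (x + y) ^ (-r) = x * (x ^ (s - r) * K₁) := by
      rw [h1, ← mul_assoc, mul_inv_cancel₀ hx.ne', one_mul]
    rw [hI, show s + 1 - r = (s - r) + 1 by ring, Real.rpow_add hx, Real.rpow_one]
    ring
  refine ⟨ENNReal.ofReal D + 1, by simp, ?_⟩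
  intro f hf
  set N := eLpNorm f (ENNReal.ofReal p) (wMeasure a) with hNdef
  have hp0' : ENNReal.ofReal p ≠ 0 := by
    simp only [ne_eq, ENNReal.ofReal_eq_zero, not_le]; exact hp0
  suffices h : ∀ x ∈ Ioi (0:ℝ), (‖Hop α β γ f x‖₊ : ℝ≥0∞) ≤ ENNReal.ofReal D * N by
    rw [show (⊤:ℝ≥0∞) = ∞ from rfl, eLpNorm_exponent_top]
    unfold eLpNormEssSup
    refine le_trans (essSup_le_of_ae_le _
      ((ae_restrict_iff' measurableSet_Ioi).mpr (ae_of_all _ h))) ?_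
    exact mul_le_mul_left le_self_add _
  intro x hx
  have hx0 : (0:ℝ) < x := hx
  set G1 : ℝ → ℝ≥0∞ := fun y => (‖f y‖₊ : ℝ≥0∞) * ENNReal.ofReal (y ^ (a / p)) with hG1def
  set G2 : ℝ → ℝ≥0∞ := fun y => ENNReal.ofReal (y ^ (β - a / p) * (x + y) ^ (-γ)) with hG2def
  have step1 : (‖Hop α β γ f x‖₊ : ℝ≥0∞)
      ≤ ENNReal.ofReal (x ^ α) * ∫⁻ y in Ioi (0:ℝ), (G1 * G2) y := by
    have hHop : Hop α β γ f x = x ^ α * ∫ y in Ioi (0:ℝ), f y * y ^ β / (x + y) ^ γ := rfl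
    rw [hHop, ← enorm_eq_nnnorm, enorm_mul,
      Real.enorm_eq_ofReal (Real.rpow_nonneg hx0.le α)]
    refine mul_le_mul_right ?_ _
    refine le_trans (enorm_integral_le_lintegral_enorm _) ?_
    refine le_of_eq (setLIntegral_congr_fun measurableSet_Ioi (fun y hy => ?_))
    have hy0 : (0:ℝ) < y := hy
    have hw : f y * y ^ β / (x + y) ^ γ
        = f y * (y ^ (a / p) * (y ^ (β - a / p) * (x + y) ^ (-γ))) := by
      have e1 : y ^ (a / p) * y ^ (β - a / p) = y ^ β := by
        rw [← Real.rpow_add hy0]; norm_num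
      rw [Real.rpow_neg (by positivity : (0:ℝ) ≤ x + y), ← e1]
      ring
    have hxy0 : (0:ℝ) < x + y := by linarith
    rw [hw, enorm_mul, enorm_eq_nnnorm,
      Real.enorm_eq_ofReal (mul_nonneg (Real.rpow_nonneg hy0.le _)
        (mul_nonneg (Real.rpow_nonneg hy0.le _) (Real.rpow_nonneg hxy0.le _))),
      Pi.mul_apply, hG1def, hG2def,
      ENNReal.ofReal_mul (Real.rpow_nonneg hy0.le _), mul_assoc]
  have hG1m : AEMeasurable G1 (volume.restrict (Ioi (0:ℝ))) := by
    rw [hG1def]; fun_prop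
  have hG2m : AEMeasurable G2 (volume.restrict (Ioi (0:ℝ))) := by
    rw [hG2def]; fun_prop
  have holder := ENNReal.lintegral_mul_le_Lp_mul_Lq (volume.restrict (Ioi (0:ℝ))) hpq hG1m hG2m
  have hNcalc : (∫⁻ y in Ioi (0:ℝ), G1 y ^ p) ^ (1 / p) = N := by
    rw [hNdef, eLpNorm_eq_lintegral_rpow_enorm_toReal hp0' ofReal_ne_top,
      ENNReal.toReal_ofReal hp0.le]
    congr 1
    rw [wMeasure, lintegral_withDensity_eq_lintegral_mul _ (by fun_prop)
      (hf.enorm.pow_const p)]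
    refine (setLIntegral_congr_fun measurableSet_Ioi (fun y hy => ?_)).symm
    have hy0 : (0:ℝ) < y := hy
    simp only [Pi.mul_apply, hG1def]
    rw [ENNReal.mul_rpow_of_nonneg _ _ hp0.le,
      ENNReal.ofReal_rpow_of_pos (Real.rpow_pos_of_pos hy0 _),
      ← Real.rpow_mul hy0.le, div_mul_cancel₀ _ hp0.ne', mul_comm, enorm_eq_nnnorm]
  have hG2calc : ∫⁻ y in Ioi (0:ℝ), G2 y ^ q = ENNReal.ofReal (x ^ (s + 1 - r) * K₁) := by
    rw [← hKx x hx0,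
      ofReal_integral_eq_lintegral_ofReal (integrableOn_kernel_Ioi hx0 hs hsr)
        ((ae_restrict_iff' measurableSet_Ioi).mpr (ae_of_all _ fun y hy => by
          have hy0 : (0:ℝ) < y := hy
          positivity))]
    refine setLIntegral_congr_fun measurableSet_Ioi (fun y hy => ?_)
    have hy0 : (0:ℝ) < y := hy
    have hxy0 : (0:ℝ) < x + y := by linarith
    rw [hG2def,
      ENNReal.ofReal_rpow_of_pos (mul_pos (Real.rpow_pos_of_pos hy0 _)
        (Real.rpow_pos_of_pos hxy0 _)),
      Real.mul_rpow (Real.rpow_nonneg hy0.le _) (Real.rpow_nonneg hxy0.le _),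
      ← Real.rpow_mul hy0.le, ← Real.rpow_mul hxy0.le, neg_mul]
  have h5 : s + 1 - r = -q * α := by linarith [hrs]
  have hexp : (s + 1 - r) * (1 / q) = -α := by
    rw [h5]
    field_simp
  have hone : ENNReal.ofReal (x ^ α) * ENNReal.ofReal (x ^ (-α)) = 1 := by
    rw [← ENNReal.ofReal_mul (Real.rpow_nonneg hx0.le _), ← Real.rpow_add hx0,
      add_neg_cancel, Real.rpow_zero, ENNReal.ofReal_one]
  calc (‖Hop α β γ f x‖₊ : ℝ≥0∞)
      ≤ ENNReal.ofReal (x ^ α) * ∫⁻ y in Ioi (0:ℝ), (G1 * G2) y := step1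
    _ ≤ ENNReal.ofReal (x ^ α) *
        ((∫⁻ y in Ioi (0:ℝ), G1 y ^ p) ^ (1/p) * (∫⁻ y in Ioi (0:ℝ), G2 y ^ q) ^ (1/q)) :=
        mul_le_mul_right holder _
    _ = ENNReal.ofReal (x ^ α) * (N * (ENNReal.ofReal (x ^ (s+1-r) * K₁)) ^ (1/q)) := by
        rw [hNcalc, hG2calc]
    _ = ENNReal.ofReal (x ^ α) * (N * (ENNReal.ofReal (x ^ (-α)) * ENNReal.ofReal D)) := by
        rw [ENNReal.ofReal_rpow_of_nonneg (mul_nonneg (Real.rpow_nonneg hx0.le _) hK₁0)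
            (by positivity : (0:ℝ) ≤ 1/q),
          Real.mul_rpow (Real.rpow_nonneg hx0.le _) hK₁0,
          ← Real.rpow_mul hx0.le, hexp, hDdef,
          ENNReal.ofReal_mul (Real.rpow_nonneg hx0.le _)]
    _ = (ENNReal.ofReal (x ^ α) * ENNReal.ofReal (x ^ (-α))) * (ENNReal.ofReal D * N) := by
        ring
    _ = ENNReal.ofReal D * N := by rw [hone, one_mul]

theorem stmt_11 (a p α β γ : ℝ) (ha : -1 < a) (hp : 1 < p) :
    (∃ C : ℝ≥0∞, C ≠ ⊤ ∧ ∀ f : ℝ → ℝ, Measurable f →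
        eLpNorm (Hop α β γ f) ⊤ (volume.restrict (Ioi (0:ℝ)))
          ≤ C * eLpNorm f (ENNReal.ofReal p) (wMeasure a))
      ↔ (γ = α + β + 1 - (a + 1) / p ∧ 0 < α ∧ a + 1 < p * (β + 1)) := by
  constructor
  · rintro ⟨C, hC, hb⟩
    have hγ := nec_gamma ha hp hC hb
    exact ⟨hγ, nec_alpha ha hp hC hγ hb, nec_beta ha hp hC hb⟩
  · rintro ⟨hγ, hα, hβ⟩
    exact sufficiency ha hp hγ hα hβ
end

section
/- Let a > -1. Assume -α < a+1 < β+1 and γ = α + β + 1. Then the operator norm of H_{α,β,γ} on L¹((0,∞), x^a dx) equals B(β - a, α + a + 1). -/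
open MeasureTheory Set ENNReal

lemma hil_meas_core (p q y : ℝ) :
    Measurable (fun x : ℝ => ENNReal.ofReal (x ^ p / (x + y) ^ q)) :=
  ((measurable_id.pow_const p).div ((measurable_id.add_const y).pow_const q)).ennreal_ofReal

/-- Integrability of the Beta-type integrand. -/
lemma hil_integrable {p q : ℝ} (hp : -1 < p) (hq : p + 1 < q) :
    IntegrableOn (fun u : ℝ => u ^ p / (1 + u) ^ q) (Ioi (0:ℝ)) := by
  have hqpos : (0:ℝ) < q := by linarith
  have hmeas : Measurable (fun u : ℝ => u ^ p / (1 + u) ^ q) :=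
    (measurable_id.pow_const p).div ((measurable_const.add measurable_id).pow_const q)
  have h01 : IntegrableOn (fun u : ℝ => u ^ p / (1 + u) ^ q) (Ioc (0:ℝ) 1) := by
    have hint : IntegrableOn (fun u : ℝ => u ^ p) (Ioc (0:ℝ) 1) := by
      have := intervalIntegral.intervalIntegrable_rpow' (a := (0:ℝ)) (b := 1) hp
      rwa [intervalIntegrable_iff_integrableOn_Ioc_of_le zero_le_one] at this
    refine hint.mono' hmeas.aestronglyMeasurable ?_
    filter_upwards [ae_restrict_mem measurableSet_Ioc] with u hu
    have hu0 : 0 < u := hu.1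
    have h1u : (1:ℝ) ≤ 1 + u := by linarith
    have hpow : (1:ℝ) ≤ (1 + u) ^ q := Real.one_le_rpow h1u hqpos.le
    rw [Real.norm_eq_abs, abs_div, abs_of_nonneg (Real.rpow_nonneg hu0.le p),
      abs_of_nonneg (Real.rpow_nonneg (by linarith) q)]
    calc u ^ p / (1 + u) ^ q ≤ u ^ p / 1 :=
          div_le_div_of_nonneg_left (Real.rpow_nonneg hu0.le p) one_pos hpow
      _ = u ^ p := div_one _
  have h1i : IntegrableOn (fun u : ℝ => u ^ p / (1 + u) ^ q) (Ioi (1:ℝ)) := by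
    have hint : IntegrableOn (fun u : ℝ => u ^ (p - q)) (Ioi (1:ℝ)) :=
      integrableOn_Ioi_rpow_of_lt (by linarith) one_pos
    refine hint.mono' hmeas.aestronglyMeasurable ?_
    filter_upwards [ae_restrict_mem measurableSet_Ioi] with u hu
    have hu0 : (0:ℝ) < u := lt_trans one_pos hu
    have hle : u ^ q ≤ (1 + u) ^ q := Real.rpow_le_rpow hu0.le (by linarith) hqpos.le
    rw [Real.norm_eq_abs, abs_div, abs_of_nonneg (Real.rpow_nonneg hu0.le p),
      abs_of_nonneg (Real.rpow_nonneg (by linarith) q), Real.rpow_sub hu0, div_eq_mul_inv,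
      ← div_eq_mul_inv]
    exact div_le_div_of_nonneg_left (Real.rpow_nonneg hu0.le p)
      (Real.rpow_pos_of_pos hu0 q) hle
  have : IntegrableOn (fun u : ℝ => u ^ p / (1 + u) ^ q) (Ioc (0:ℝ) 1 ∪ Ioi 1) :=
    h01.union h1i
  rwa [Ioc_union_Ioi_eq_Ioi zero_le_one] at this

/-- Symmetry of the Beta function. -/
lemma hil_beta_symm (m n : ℝ) : Beta m n = Beta n m := by
  unfold Beta
  rw [← integral_comp_rpow_Ioi (fun u => u ^ (n - 1) / (1 + u) ^ (n + m))
    (p := -1) (by norm_num)]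
  refine setIntegral_congr_fun measurableSet_Ioi fun x hx => ?_
  have hx0 : (0:ℝ) < x := hx
  have hx1 : (0:ℝ) < 1 + x := by linarith
  have hxinv : x ^ (-1 : ℝ) = x⁻¹ := Real.rpow_neg_one x
  have h1 : (x⁻¹) ^ (n - 1) = x ^ (1 - n) := by
    rw [← Real.rpow_neg_one x, ← Real.rpow_mul hx0.le]
    congr 1; ring
  have h3 : (1 + x⁻¹) ^ (n + m) = (1 + x) ^ (n + m) / x ^ (n + m) := by
    rw [show (1:ℝ) + x⁻¹ = (1 + x) / x by field_simp; ring, Real.div_rpow hx1.le hx0.le]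
  have hc : x ^ (-1 - 1 : ℝ) * (x ^ (1 - n) * x ^ (n + m)) = x ^ (m - 1) := by
    rw [← Real.rpow_add hx0, ← Real.rpow_add hx0]; congr 1; ring
  rw [smul_eq_mul, hxinv, h1, h3, div_div_eq_mul_div,
    show |(-1:ℝ)| = 1 by norm_num, one_mul, mul_div_assoc', hc, add_comm n m]

/-- Scaling identity for the key inner integral. -/
lemma hil_scale (p q : ℝ) {y : ℝ} (hy : 0 < y) :
    ∫⁻ x in Ioi (0:ℝ), ENNReal.ofReal (x ^ p / (x + y) ^ q)
      = ENNReal.ofReal (y ^ (p + 1 - q)) *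
        ∫⁻ u in Ioi (0:ℝ), ENNReal.ofReal (u ^ p / (1 + u) ^ q) := by
  have hmap : Measure.map (fun u : ℝ => y * u) (volume.restrict (Ioi (0:ℝ)))
      = ENNReal.ofReal y⁻¹ • volume.restrict (Ioi (0:ℝ)) := by
    have h1 : (fun u : ℝ => y * u) ⁻¹' (Ioi 0) = Ioi 0 := by
      ext u
      simp only [mem_preimage, mem_Ioi]
      constructor
      · intro h
        by_contra hu
        push_neg at hu
        nlinarith
      · exact fun h => mul_pos hy h
    calc Measure.map (fun u : ℝ => y * u) (volume.restrict (Ioi (0:ℝ)))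
        = Measure.map (fun u : ℝ => y * u)
            (volume.restrict ((fun u : ℝ => y * u) ⁻¹' (Ioi 0))) := by rw [h1]
      _ = (Measure.map (fun u : ℝ => y * u) volume).restrict (Ioi 0) :=
          (Measure.restrict_map (measurable_const_mul y) measurableSet_Ioi).symm
      _ = ENNReal.ofReal y⁻¹ • volume.restrict (Ioi (0:ℝ)) := by
          rw [show (fun u : ℝ => y * u) = (y * ·) from rfl,
            Real.map_volume_mul_left hy.ne', Measure.restrict_smul,
            abs_of_nonneg (inv_nonneg.mpr hy.le)]
  have hg : Measurable (fun x : ℝ => ENNReal.ofReal (x ^ p / (x + y) ^ q)) :=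
    hil_meas_core p q y
  have hcomp : ∫⁻ u, ENNReal.ofReal ((y * u) ^ p / (y * u + y) ^ q)
        ∂(volume.restrict (Ioi (0:ℝ)))
      = ENNReal.ofReal y⁻¹ * ∫⁻ x in Ioi (0:ℝ), ENNReal.ofReal (x ^ p / (x + y) ^ q) := by
    rw [← lintegral_map hg (measurable_const_mul y), hmap, lintegral_smul_measure, smul_eq_mul]
  have hptwise : ∀ u ∈ Ioi (0:ℝ), ENNReal.ofReal ((y * u) ^ p / (y * u + y) ^ q)
      = ENNReal.ofReal (y ^ (p - q)) * ENNReal.ofReal (u ^ p / (1 + u) ^ q) := by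
    intro u hu
    have hu0 : (0:ℝ) < u := hu
    have h1u : (0:ℝ) < 1 + u := by linarith
    have e1 : (y * u) ^ p = y ^ p * u ^ p := Real.mul_rpow hy.le hu0.le
    have e2 : (y * u + y) ^ q = y ^ q * (1 + u) ^ q := by
      rw [show y * u + y = y * (1 + u) by ring, Real.mul_rpow hy.le h1u.le]
    rw [e1, e2, ← ENNReal.ofReal_mul (Real.rpow_nonneg hy.le _)]
    congr 1
    rw [Real.rpow_sub hy, div_mul_div_comm]
  have : ∫⁻ u in Ioi (0:ℝ), ENNReal.ofReal ((y * u) ^ p / (y * u + y) ^ q)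
      = ENNReal.ofReal (y ^ (p - q)) * ∫⁻ u in Ioi (0:ℝ), ENNReal.ofReal (u ^ p / (1 + u) ^ q) := by
    rw [setLIntegral_congr_fun measurableSet_Ioi hptwise]
    exact lintegral_const_mul' _ _ ENNReal.ofReal_ne_top
  rw [this] at hcomp
  have hyinv : ENNReal.ofReal y * ENNReal.ofReal y⁻¹ = 1 := by
    rw [← ENNReal.ofReal_mul hy.le, mul_inv_cancel₀ hy.ne', ENNReal.ofReal_one]
  calc ∫⁻ x in Ioi (0:ℝ), ENNReal.ofReal (x ^ p / (x + y) ^ q)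
      = ENNReal.ofReal y * (ENNReal.ofReal y⁻¹ *
          ∫⁻ x in Ioi (0:ℝ), ENNReal.ofReal (x ^ p / (x + y) ^ q)) := by
        rw [← mul_assoc, hyinv, one_mul]
    _ = ENNReal.ofReal y * (ENNReal.ofReal (y ^ (p - q)) *
          ∫⁻ u in Ioi (0:ℝ), ENNReal.ofReal (u ^ p / (1 + u) ^ q)) := by rw [← hcomp]
    _ = ENNReal.ofReal (y ^ (p + 1 - q)) *
          ∫⁻ u in Ioi (0:ℝ), ENNReal.ofReal (u ^ p / (1 + u) ^ q) := by
        rw [← mul_assoc, ← ENNReal.ofReal_mul hy.le]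
        congr 2
        rw [show p + 1 - q = 1 + (p - q) by ring, Real.rpow_add hy, Real.rpow_one]


lemma hil_L {p q : ℝ} (hp : -1 < p) (hq : p + 1 < q) :
    ∫⁻ u in Ioi (0:ℝ), ENNReal.ofReal (u ^ p / (1 + u) ^ q)
      = ENNReal.ofReal (Beta (p + 1) (q - p - 1)) := by
  rw [← ofReal_integral_eq_lintegral_ofReal (hil_integrable hp hq) ?_]
  · congr 1
    unfold Beta
    refine setIntegral_congr_fun measurableSet_Ioi fun u hu => ?_
    rw [show p + 1 - 1 = p by ring, show p + 1 + (q - p - 1) = q by ring]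
  · filter_upwards [ae_restrict_mem measurableSet_Ioi] with u hu
    exact div_nonneg (Real.rpow_nonneg (le_of_lt hu) _)
      (Real.rpow_nonneg (by simp only [mem_Ioi] at hu; linarith) _)

/-- The key Tonelli computation. -/
lemma hil_key {a α β : ℝ} (ha1 : 0 < α + a + 1) (hab : a < β)
    (F : ℝ → ℝ≥0∞) (hF : Measurable F) (hFt : ∀ y, F y ≠ ⊤) :
    ∫⁻ x in Ioi (0:ℝ),
        (∫⁻ y in Ioi (0:ℝ), F y * ENNReal.ofReal (y ^ β / (x + y) ^ (α + β + 1)))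
          * ENNReal.ofReal (x ^ (α + a))
      = ENNReal.ofReal (Beta (β - a) (α + a + 1)) *
          ∫⁻ y in Ioi (0:ℝ), F y * ENNReal.ofReal (y ^ a) := by
  have hL : ∫⁻ u in Ioi (0:ℝ), ENNReal.ofReal (u ^ (α + a) / (1 + u) ^ (α + β + 1))
      = ENNReal.ofReal (Beta (β - a) (α + a + 1)) := by
    rw [hil_L (by linarith) (by linarith), hil_beta_symm]
    congr 2 <;> ring
  have hm : Measurable (Function.uncurry fun x y : ℝ =>
      F y * ENNReal.ofReal (y ^ β / (x + y) ^ (α + β + 1)) * ENNReal.ofReal (x ^ (α + a))) := by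
    apply Measurable.mul
    · apply Measurable.mul
      · exact hF.comp measurable_snd
      · exact ((measurable_snd.pow_const β).div
          ((measurable_fst.add measurable_snd).pow_const (α + β + 1))).ennreal_ofReal
    · exact (measurable_fst.pow_const (α + a)).ennreal_ofReal
  calc ∫⁻ x in Ioi (0:ℝ),
        (∫⁻ y in Ioi (0:ℝ), F y * ENNReal.ofReal (y ^ β / (x + y) ^ (α + β + 1)))
          * ENNReal.ofReal (x ^ (α + a))
      = ∫⁻ x in Ioi (0:ℝ), ∫⁻ y in Ioi (0:ℝ),
          F y * ENNReal.ofReal (y ^ β / (x + y) ^ (α + β + 1))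
            * ENNReal.ofReal (x ^ (α + a)) :=
        lintegral_congr fun x => (lintegral_mul_const' _ _ ENNReal.ofReal_ne_top).symm
    _ = ∫⁻ y in Ioi (0:ℝ), ∫⁻ x in Ioi (0:ℝ),
          F y * ENNReal.ofReal (y ^ β / (x + y) ^ (α + β + 1))
            * ENNReal.ofReal (x ^ (α + a)) :=
        lintegral_lintegral_swap hm.aemeasurable
    _ = ∫⁻ y in Ioi (0:ℝ),
          ENNReal.ofReal (Beta (β - a) (α + a + 1)) * (F y * ENNReal.ofReal (y ^ a)) := by
        refine setLIntegral_congr_fun measurableSet_Ioi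
          (fun y hy => ?_)
        have hy0 : (0:ℝ) < y := hy
        have e1 : ∀ x ∈ Ioi (0:ℝ),
            F y * ENNReal.ofReal (y ^ β / (x + y) ^ (α + β + 1))
              * ENNReal.ofReal (x ^ (α + a))
            = F y * ENNReal.ofReal (y ^ β)
              * ENNReal.ofReal (x ^ (α + a) / (x + y) ^ (α + β + 1)) := by
          intro x hx
          have hx0 : (0:ℝ) < x := hx
          rw [mul_assoc, mul_assoc]
          congr 1
          rw [← ENNReal.ofReal_mul (div_nonneg (Real.rpow_nonneg hy0.le _)
              (Real.rpow_nonneg (by linarith) _)),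
            ← ENNReal.ofReal_mul (Real.rpow_nonneg hy0.le _)]
          congr 1
          rw [div_mul_eq_mul_div, mul_div_assoc]
        rw [setLIntegral_congr_fun measurableSet_Ioi e1,
          lintegral_const_mul' _ _ (ENNReal.mul_ne_top (hFt y) ENNReal.ofReal_ne_top),
          hil_scale _ _ hy0, hL]
        have e2 : ENNReal.ofReal (y ^ β) * ENNReal.ofReal (y ^ (α + a + 1 - (α + β + 1)))
            = ENNReal.ofReal (y ^ a) := by
          rw [← ENNReal.ofReal_mul (Real.rpow_nonneg hy0.le _), ← Real.rpow_add hy0]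
          congr 1
          ring
        calc F y * ENNReal.ofReal (y ^ β)
              * (ENNReal.ofReal (y ^ (α + a + 1 - (α + β + 1)))
                * ENNReal.ofReal (Beta (β - a) (α + a + 1)))
            = ENNReal.ofReal (Beta (β - a) (α + a + 1)) *
                (F y * (ENNReal.ofReal (y ^ β)
                  * ENNReal.ofReal (y ^ (α + a + 1 - (α + β + 1))))) := by ring
          _ = ENNReal.ofReal (Beta (β - a) (α + a + 1)) *
                (F y * ENNReal.ofReal (y ^ a)) := by rw [e2]
    _ = ENNReal.ofReal (Beta (β - a) (α + a + 1)) *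
          ∫⁻ y in Ioi (0:ℝ), F y * ENNReal.ofReal (y ^ a) :=
        lintegral_const_mul' _ _ ENNReal.ofReal_ne_top

/-- `eLpNorm` with respect to `wMeasure` as a set lintegral. -/
lemma hil_norm (a : ℝ) (g : ℝ → ℝ) :
    eLpNorm g 1 (wMeasure a)
      = ∫⁻ x in Ioi (0:ℝ), ENNReal.ofReal |g x| * ENNReal.ofReal (x ^ a) := by
  rw [eLpNorm_one_eq_lintegral_enorm, wMeasure,
    lintegral_withDensity_eq_lintegral_mul_non_measurable _
      (measurable_id'.pow_const a).ennreal_ofReal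
      (Filter.Eventually.of_forall fun x => ENNReal.ofReal_lt_top)]
  refine lintegral_congr fun x => ?_
  simp only [Pi.mul_apply]
  rw [Real.enorm_eq_ofReal_abs, mul_comm]


/-- Upper bound: membership of the Beta constant in the defining set. -/
lemma hil_upper {a α β : ℝ} (ha1 : 0 < α + a + 1) (hab : a < β)
    (f : ℝ → ℝ) (hf : Measurable f) :
    eLpNorm (Hop α β (α + β + 1) f) 1 (wMeasure a)
      ≤ ENNReal.ofReal (Beta (β - a) (α + a + 1)) * eLpNorm f 1 (wMeasure a) := by
  rw [hil_norm, hil_norm]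
  have step : ∀ x ∈ Ioi (0:ℝ),
      ENNReal.ofReal |Hop α β (α + β + 1) f x| * ENNReal.ofReal (x ^ a)
        ≤ (∫⁻ y in Ioi (0:ℝ),
              ENNReal.ofReal |f y| * ENNReal.ofReal (y ^ β / (x + y) ^ (α + β + 1)))
            * ENNReal.ofReal (x ^ (α + a)) := by
    intro x hx
    have hx0 : (0:ℝ) < x := hx
    set g := fun y : ℝ => f y * y ^ β / (x + y) ^ (α + β + 1) with hgdef
    have hgm : Measurable g :=
      (hf.mul (measurable_id'.pow_const β)).div
        ((measurable_const.add measurable_id').pow_const (α + β + 1))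
    set I := ∫ y in Ioi (0:ℝ), g y with hI
    have habs : |Hop α β (α + β + 1) f x| = x ^ α * |I| := by
      rw [Hop, abs_mul, abs_of_nonneg (Real.rpow_nonneg hx0.le α)]
    have key1 : ENNReal.ofReal |I| ≤ ∫⁻ y in Ioi (0:ℝ),
        ENNReal.ofReal |f y| * ENNReal.ofReal (y ^ β / (x + y) ^ (α + β + 1)) := by
      have hb : ENNReal.ofReal |I| ≤ ENNReal.ofReal (∫ y in Ioi (0:ℝ), |g y|) := by
        apply ENNReal.ofReal_le_ofReal
        simpa [Real.norm_eq_abs] using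
          norm_integral_le_integral_norm (μ := volume.restrict (Ioi 0)) g
      refine hb.trans ?_
      have heq : ∀ y ∈ Ioi (0:ℝ),
          ENNReal.ofReal |g y|
            = ENNReal.ofReal |f y| * ENNReal.ofReal (y ^ β / (x + y) ^ (α + β + 1)) := by
        intro y hy
        have hy0 : (0:ℝ) < y := hy
        rw [hgdef]
        simp only
        rw [mul_div_assoc, abs_mul,
          abs_of_nonneg (div_nonneg (Real.rpow_nonneg hy0.le _)
            (Real.rpow_nonneg (by linarith) _)),
          ENNReal.ofReal_mul (abs_nonneg _)]
      rw [← setLIntegral_congr_fun measurableSet_Ioi heq]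
      by_cases hint : Integrable g (volume.restrict (Ioi 0))
      · rw [ofReal_integral_eq_lintegral_ofReal hint.abs
          (Filter.Eventually.of_forall fun y => abs_nonneg _)]
      · rw [integral_undef, ENNReal.ofReal_zero]
        · exact zero_le'
        · intro h
          exact hint (h.mono hgm.aestronglyMeasurable
            (Filter.Eventually.of_forall fun y => by
              simp [Real.norm_eq_abs, abs_abs, le_refl]))
    have e2 : ENNReal.ofReal (x ^ α) * ENNReal.ofReal (x ^ a)
        = ENNReal.ofReal (x ^ (α + a)) := by
      rw [← ENNReal.ofReal_mul (Real.rpow_nonneg hx0.le α), ← Real.rpow_add hx0]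
    calc ENNReal.ofReal |Hop α β (α + β + 1) f x| * ENNReal.ofReal (x ^ a)
        = ENNReal.ofReal |I| * (ENNReal.ofReal (x ^ α) * ENNReal.ofReal (x ^ a)) := by
          rw [habs, ENNReal.ofReal_mul (Real.rpow_nonneg hx0.le α)]
          ring
      _ = ENNReal.ofReal |I| * ENNReal.ofReal (x ^ (α + a)) := by rw [e2]
      _ ≤ (∫⁻ y in Ioi (0:ℝ),
            ENNReal.ofReal |f y| * ENNReal.ofReal (y ^ β / (x + y) ^ (α + β + 1)))
            * ENNReal.ofReal (x ^ (α + a)) := mul_le_mul_left key1 _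
  calc ∫⁻ x in Ioi (0:ℝ),
        ENNReal.ofReal |Hop α β (α + β + 1) f x| * ENNReal.ofReal (x ^ a)
      ≤ ∫⁻ x in Ioi (0:ℝ), (∫⁻ y in Ioi (0:ℝ),
            ENNReal.ofReal |f y| * ENNReal.ofReal (y ^ β / (x + y) ^ (α + β + 1)))
            * ENNReal.ofReal (x ^ (α + a)) := setLIntegral_mono' measurableSet_Ioi step
    _ = ENNReal.ofReal (Beta (β - a) (α + a + 1)) *
          ∫⁻ y in Ioi (0:ℝ), ENNReal.ofReal |f y| * ENNReal.ofReal (y ^ a) :=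
        hil_key ha1 hab _ ((continuous_abs.measurable.comp hf).ennreal_ofReal)
          (fun y => ENNReal.ofReal_ne_top)

/-- The extremal function. -/
noncomputable def hilF (a : ℝ) : ℝ → ℝ := (Ioc (0:ℝ) 1).indicator (fun y => y ^ (-a))

lemma hilF_meas (a : ℝ) : Measurable (hilF a) :=
  (measurable_id'.pow_const (-a)).indicator measurableSet_Ioc

lemma hilF_nonneg (a : ℝ) (y : ℝ) : 0 ≤ hilF a y :=
  indicator_nonneg (fun z hz => Real.rpow_nonneg hz.1.le _) y

lemma hilF_norm (a : ℝ) :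
    ∫⁻ y in Ioi (0:ℝ), ENNReal.ofReal |hilF a y| * ENNReal.ofReal (y ^ a) = 1 := by
  have he : ∀ y ∈ Ioi (0:ℝ), ENNReal.ofReal |hilF a y| * ENNReal.ofReal (y ^ a)
      = (Ioc (0:ℝ) 1).indicator (fun _ => (1:ℝ≥0∞)) y := by
    intro y hy
    by_cases h : y ∈ Ioc (0:ℝ) 1
    · have hy0 : (0:ℝ) < y := h.1
      rw [hilF, indicator_of_mem h, indicator_of_mem h,
        abs_of_nonneg (Real.rpow_nonneg hy0.le _),
        ← ENNReal.ofReal_mul (Real.rpow_nonneg hy0.le _), ← Real.rpow_add hy0]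
      norm_num
    · rw [hilF, indicator_of_notMem h, indicator_of_notMem h]
      simp
  rw [setLIntegral_congr_fun measurableSet_Ioi he,
    lintegral_indicator measurableSet_Ioc, Measure.restrict_restrict measurableSet_Ioc,
    inter_eq_left.mpr (fun y hy => hy.1), lintegral_one, Measure.restrict_apply_univ,
    Real.volume_Ioc]
  norm_num

lemma hilF_Hop {a α β : ℝ} (ha1 : 0 < α + a + 1) (hab : a < β) :
    eLpNorm (Hop α β (α + β + 1) (hilF a)) 1 (wMeasure a)
      = ENNReal.ofReal (Beta (β - a) (α + a + 1)) := by
  rw [hil_norm]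
  have hq : (0:ℝ) < α + β + 1 := by linarith
  have step : ∀ x ∈ Ioi (0:ℝ),
      ENNReal.ofReal |Hop α β (α + β + 1) (hilF a) x| * ENNReal.ofReal (x ^ a)
        = (∫⁻ y in Ioi (0:ℝ),
              ENNReal.ofReal |hilF a y| * ENNReal.ofReal (y ^ β / (x + y) ^ (α + β + 1)))
            * ENNReal.ofReal (x ^ (α + a)) := by
    intro x hx
    have hx0 : (0:ℝ) < x := hx
    set g := fun y : ℝ => hilF a y * y ^ β / (x + y) ^ (α + β + 1) with hgdef
    have hgm : Measurable g :=
      ((hilF_meas a).mul (measurable_id'.pow_const β)).div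
        ((measurable_const.add measurable_id').pow_const (α + β + 1))
    have hgnn : ∀ᵐ y ∂(volume.restrict (Ioi (0:ℝ))), 0 ≤ g y := by
      filter_upwards [ae_restrict_mem measurableSet_Ioi] with y hy
      have hy0 : (0:ℝ) < y := hy
      exact div_nonneg (mul_nonneg (hilF_nonneg a y) (Real.rpow_nonneg hy0.le β))
        (Real.rpow_nonneg (by linarith) _)
    have hgint : Integrable g (volume.restrict (Ioi (0:ℝ))) := by
      have hbound : Integrable
          ((Ioc (0:ℝ) 1).indicator (fun _ => 1 / x ^ (α + β + 1) : ℝ → ℝ))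
          (volume.restrict (Ioi 0)) := by
        rw [integrable_indicator_iff measurableSet_Ioc]
        refine integrableOn_const (ne_of_lt ?_)
        exact lt_of_le_of_lt (Measure.restrict_apply_le _ _)
          (by rw [Real.volume_Ioc]; norm_num)
      refine hbound.mono' hgm.aestronglyMeasurable ?_
      filter_upwards [ae_restrict_mem measurableSet_Ioi] with y hy
      have hy0 : (0:ℝ) < y := hy
      by_cases h : y ∈ Ioc (0:ℝ) 1
      · rw [indicator_of_mem h]
        have hgy : g y = y ^ (β - a) / (x + y) ^ (α + β + 1) := by
          rw [hgdef]
          simp only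
          rw [hilF, indicator_of_mem h, ← Real.rpow_add hy0,
            show -a + β = β - a by ring]
        have h1 : y ^ (β - a) ≤ 1 := Real.rpow_le_one hy0.le h.2 (by linarith)
        have h2 : x ^ (α + β + 1) ≤ (x + y) ^ (α + β + 1) :=
          Real.rpow_le_rpow hx0.le (by linarith) hq.le
        rw [Real.norm_eq_abs, hgy, abs_of_nonneg (div_nonneg
          (Real.rpow_nonneg hy0.le _) (Real.rpow_nonneg (by linarith) _))]
        exact div_le_div₀ zero_le_one h1 (Real.rpow_pos_of_pos hx0 _) h2
      · rw [indicator_of_notMem h]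
        have hgy : g y = 0 := by
          rw [hgdef]
          simp only
          rw [hilF, indicator_of_notMem h, zero_mul, zero_div]
        simp [hgy]
    have hHnn : 0 ≤ ∫ y in Ioi (0:ℝ), g y := integral_nonneg_of_ae hgnn
    have hofReal : ENNReal.ofReal (∫ y in Ioi (0:ℝ), g y)
        = ∫⁻ y in Ioi (0:ℝ), ENNReal.ofReal (g y) :=
      ofReal_integral_eq_lintegral_ofReal hgint hgnn
    have hptw : ∀ y ∈ Ioi (0:ℝ), ENNReal.ofReal (g y)
        = ENNReal.ofReal |hilF a y| * ENNReal.ofReal (y ^ β / (x + y) ^ (α + β + 1)) := by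
      intro y hy
      have hy0 : (0:ℝ) < y := hy
      rw [hgdef]
      simp only
      rw [mul_div_assoc, ENNReal.ofReal_mul (hilF_nonneg a y),
        abs_of_nonneg (hilF_nonneg a y)]
    have e2 : ENNReal.ofReal (x ^ α) * ENNReal.ofReal (x ^ a)
        = ENNReal.ofReal (x ^ (α + a)) := by
      rw [← ENNReal.ofReal_mul (Real.rpow_nonneg hx0.le α), ← Real.rpow_add hx0]
    have hHop : Hop α β (α + β + 1) (hilF a) x = x ^ α * ∫ y in Ioi (0:ℝ), g y := rfl
    rw [hHop, abs_of_nonneg (mul_nonneg (Real.rpow_nonneg hx0.le α) hHnn),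
      ENNReal.ofReal_mul (Real.rpow_nonneg hx0.le α), hofReal,
      setLIntegral_congr_fun measurableSet_Ioi hptw]
    calc ENNReal.ofReal (x ^ α) * (∫⁻ y in Ioi (0:ℝ),
            ENNReal.ofReal |hilF a y| * ENNReal.ofReal (y ^ β / (x + y) ^ (α + β + 1)))
          * ENNReal.ofReal (x ^ a)
        = (∫⁻ y in Ioi (0:ℝ),
            ENNReal.ofReal |hilF a y| * ENNReal.ofReal (y ^ β / (x + y) ^ (α + β + 1)))
            * (ENNReal.ofReal (x ^ α) * ENNReal.ofReal (x ^ a)) := by ring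
      _ = (∫⁻ y in Ioi (0:ℝ),
            ENNReal.ofReal |hilF a y| * ENNReal.ofReal (y ^ β / (x + y) ^ (α + β + 1)))
            * ENNReal.ofReal (x ^ (α + a)) := by rw [e2]
  rw [setLIntegral_congr_fun measurableSet_Ioi step,
    hil_key ha1 hab (fun y => ENNReal.ofReal |hilF a y|)
      (by exact (continuous_abs.measurable.comp (hilF_meas a)).ennreal_ofReal)
      (fun y => ENNReal.ofReal_ne_top),
    hilF_norm, mul_one]

theorem stmt_14 (a α β γ : ℝ) (ha : -1 < a)
    (h1 : -α < a + 1) (h2 : a + 1 < β + 1) (hγ : γ = α + β + 1) :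
    sInf {C : ℝ≥0∞ | ∀ f : ℝ → ℝ, Measurable f →
        eLpNorm (Hop α β γ f) 1 (wMeasure a) ≤ C * eLpNorm f 1 (wMeasure a)}
      = ENNReal.ofReal (Beta (β - a) (α + a + 1)) := by
  subst hγ
  have ha1 : 0 < α + a + 1 := by linarith
  have hab : a < β := by linarith
  apply le_antisymm
  · exact sInf_le (fun f hf => hil_upper ha1 hab f hf)
  · refine le_sInf fun C hC => ?_
    have h := hC (hilF a) (hilF_meas a)
    rw [hilF_Hop ha1 hab] at h
    have hn : eLpNorm (hilF a) 1 (wMeasure a) = 1 := by rw [hil_norm, hilF_norm]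
    rw [hn, mul_one] at h
    exact h
end
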